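/- arXiv:1903.07576 — 3 statements merged into one kernel-verified Lean document; each statement's English description precedes it below -/
import Mathlib

section
/- Let r, ρ > 0, s > 0, η ≥ 0. For any two Hamiltonians F and G with |F|_{r+ρ,s,η} < ∞ and |G|_{r+ρ,s,η} < ∞, their Poisson bracket {F,G} satisfies |{F,G}|_{r,s,η} ≤ 8·max{1, r/ρ}·|F|_{r+ρ,s,η}·|G|_{r+ρ,s,η}. Moreover, for Lipschitz families F, G over D_γ, the same estimate holds for the weighted Lipschitz norms: ‖{F,G}‖_{r,s,η} ≤ 8·max{1, r/ρ}·‖F‖_{r+ρ,s,η}·‖G‖_{r+ρ,s,η}. -/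
open scoped ENNReal BigOperators Classical

noncomputable section

/-- Multi-indices: finitely supported functions `ℤ → ℕ`. -/
abbrev MIdx := ℤ →₀ ℕ

/-- Total degree `|α| = Σ_j α_j`. -/
def deg (α : MIdx) : ℕ := ∑ j ∈ α.support, α j

/-- Momentum `π(α - β) = Σ_j j (α_j - β_j)`. -/
def mom (α β : MIdx) : ℤ :=
  ∑ j ∈ α.support ∪ β.support, j * ((α j : ℤ) - (β j : ℤ))

/-- `⟨j⟩ = max(|j|, 1)` as a real number. -/
def jb (j : ℤ) : ℝ := max |(j : ℝ)| 1

/-- The weight `u₀(r)_j = r ⟨j⟩^{-p} e^{-(a|j| + s ⟨j⟩^θ)}`. -/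
def u0 (θ p a r s : ℝ) (j : ℤ) : ℝ :=
  r * (jb j ^ p * Real.exp (a * |(j : ℝ)| + s * jb j ^ θ))⁻¹

/-- The coefficient weight `c^{(j)}_{r,s,η}(α,β) = u₀^{α+β-2e_j} e^{η |π(α-β)|}`. -/
def cwt (θ p a r s η : ℝ) (j : ℤ) (α β : MIdx) : ℝ :=
  (∏ i ∈ insert j (α.support ∪ β.support),
      u0 θ p a r s i ^ (((α i : ℤ) + (β i : ℤ)) - if i = j then 2 else 0)) *
    Real.exp (η * |(mom α β : ℝ)|)

/-- The majorant norm `|H|_{r,s,η} = sup_j Σ_{α,β} |H_{α,β}| β_j u₀^{α+β-2e_j} e^{η|π(α-β)|}`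
(with values in `ℝ≥0∞`). -/
def hnorm (θ p a r s η : ℝ) (H : MIdx → MIdx → ℂ) : ℝ≥0∞ :=
  ⨆ j : ℤ, ∑' q : MIdx × MIdx,
    ENNReal.ofReal (‖H q.1 q.2‖ * (q.2 j : ℝ) * cwt θ p a r s η j q.1 q.2)

/-- A family of coefficients is a Hamiltonian: mass conservation (`H_{α,β} = 0` unless
`|α| = |β|`) and the reality condition `H_{β,α} = conj (H_{α,β})`. -/
def IsHam (H : MIdx → MIdx → ℂ) : Prop :=
  (∀ α β : MIdx, deg α ≠ deg β → H α β = 0) ∧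
  (∀ α β : MIdx, H β α = (starRingEnd ℂ) (H α β))

/-- The set `D_γ` of `γ`-Diophantine frequencies. -/
def Dio (γ : ℝ) : Set (ℤ → ℝ) :=
  {ω | (∀ j : ℤ, |ω j - (j : ℝ) ^ 2| ≤ 1 / 2) ∧
    ∀ ℓ : ℤ →₀ ℤ, ℓ ≠ 0 →
      γ * ∏ n ∈ ℓ.support, (1 + (ℓ n : ℝ) ^ 2 * jb n ^ 2)⁻¹ <
        |∑ j ∈ ℓ.support, ω j * (ℓ j : ℝ)|}

/-- The sup distance `|ω - ω'|_∞` (with values in `ℝ≥0∞`). -/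
def dsup (ω ω' : ℤ → ℝ) : ℝ≥0∞ := ⨆ j : ℤ, ENNReal.ofReal |ω j - ω' j|

/-- The weighted Lipschitz norm
`‖H‖_{r,s,η} = sup_{ω ∈ D_γ} |H(ω)|_{r,s,η} + γ sup_{ω≠ω'} |H(ω)-H(ω')|_{r,s,η} / |ω-ω'|_∞`. -/
def hnormLip (γ θ p a r s η : ℝ) (H : (ℤ → ℝ) → MIdx → MIdx → ℂ) : ℝ≥0∞ :=
  (⨆ ω ∈ Dio γ, hnorm θ p a r s η (H ω)) +
    ENNReal.ofReal γ *
      ⨆ ω ∈ Dio γ, ⨆ ω' ∈ Dio γ,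
        hnorm θ p a r s η (fun α β => H ω α β - H ω' α β) / dsup ω ω'

/-- Coefficients of the Poisson bracket
`{F,G} = i Σ_j (∂F/∂u_j ∂G/∂ū_j - ∂F/∂ū_j ∂G/∂u_j)`: the coefficient at the pair `(A,B)` is
`Σ_{j, α+α' = A+e_j, β+β' = B+e_j} i (α_j β'_j - β_j α'_j) F_{α,β} G_{α',β'}`. -/
def pois (F G : MIdx → MIdx → ℂ) (A B : MIdx) : ℂ :=
  ∑' t : ℤ × (MIdx × MIdx) × (MIdx × MIdx),
    if t.2.1.1 + t.2.2.1 = A + Finsupp.single t.1 1 ∧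
        t.2.1.2 + t.2.2.2 = B + Finsupp.single t.1 1 then
      Complex.I *
        ((t.2.1.1 t.1 : ℂ) * (t.2.2.2 t.1 : ℂ) - (t.2.1.2 t.1 : ℂ) * (t.2.2.1 t.1 : ℂ)) *
        F t.2.1.1 t.2.1.2 * G t.2.2.1 t.2.2.2
    else 0
lemma u0_pos {θ p a r s : ℝ} (hr : 0 < r) (j : ℤ) : 0 < u0 θ p a r s j := by
  have hjb : (0:ℝ) < jb j := lt_of_lt_of_le one_pos (le_max_right _ _)
  have h1 : (0:ℝ) < jb j ^ p := Real.rpow_pos_of_pos hjb p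
  have h2 : (0:ℝ) < Real.exp (a * |(j:ℝ)| + s * jb j ^ θ) := Real.exp_pos _
  exact mul_pos hr (inv_pos.2 (mul_pos h1 h2))

lemma u0_scale {θ p a s : ℝ} {r r' : ℝ} (hr' : r' ≠ 0) (j : ℤ) :
    u0 θ p a r s j = (r / r') * u0 θ p a r' s j := by
  unfold u0; field_simp

lemma apply_eq_zero_of_not_mem_support {α : MIdx} {x : ℤ} (h : x ∉ α.support) : α x = 0 :=
  Finsupp.notMem_support_iff.1 h

lemma mom_eq_sum {α β : MIdx} {S : Finset ℤ} (h : α.support ∪ β.support ⊆ S) :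
    mom α β = ∑ i ∈ S, (i : ℤ) * ((α i : ℤ) - (β i : ℤ)) := by
  unfold mom
  apply Finset.sum_subset h
  intro x _ hx2
  have hα : α x = 0 := apply_eq_zero_of_not_mem_support fun hh => hx2 (Finset.mem_union.2 (Or.inl hh))
  have hβ : β x = 0 := apply_eq_zero_of_not_mem_support fun hh => hx2 (Finset.mem_union.2 (Or.inr hh))
  simp [hα, hβ]

lemma deg_eq_sum {α : MIdx} {S : Finset ℤ} (h : α.support ⊆ S) :
    deg α = ∑ i ∈ S, α i := by
  unfold deg
  apply Finset.sum_subset h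
  intro x _ hx2
  exact apply_eq_zero_of_not_mem_support hx2

/-- exponent function for `cwt`. -/
def Ew (α β : MIdx) (x : ℤ) (i : ℤ) : ℤ := ((α i : ℤ) + (β i : ℤ)) - if i = x then 2 else 0

lemma cwt_eq_prod {θ p a r s η : ℝ} (hr : 0 < r) (j : ℤ) (α β : MIdx) {S : Finset ℤ}
    (h : insert j (α.support ∪ β.support) ⊆ S) :
    cwt θ p a r s η j α β =
      (∏ i ∈ S, u0 θ p a r s i ^ Ew α β j i) * Real.exp (η * |(mom α β : ℝ)|) := by
  unfold cwt
  congr 1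
  apply Finset.prod_subset h
  intro x _ hx2
  have hxj : x ≠ j := fun hh => hx2 (by simp [hh])
  have hα : α x = 0 := apply_eq_zero_of_not_mem_support fun hh => hx2 (by simp [hh])
  have hβ : β x = 0 := apply_eq_zero_of_not_mem_support fun hh => hx2 (by simp [hh])
  simp [Ew, hα, hβ, hxj]

lemma cwt_pos {θ p a r s η : ℝ} (hr : 0 < r) (j : ℤ) (α β : MIdx) :
    0 < cwt θ p a r s η j α β := by
  unfold cwt
  refine mul_pos (Finset.prod_pos fun i _ => zpow_pos ?_ _) (Real.exp_pos _)
  exact u0_pos hr i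

lemma cwt_symm {θ p a r s η : ℝ} (j : ℤ) (α β : MIdx) :
    cwt θ p a r s η j β α = cwt θ p a r s η j α β := by
  unfold cwt
  have hm : mom β α = - mom α β := by
    unfold mom
    rw [Finset.union_comm, ← Finset.sum_neg_distrib]
    exact Finset.sum_congr rfl fun i _ => by ring
  rw [Finset.union_comm]
  congr 1
  · exact Finset.prod_congr rfl fun i _ => by ring_nf
  · rw [hm]; push_cast; rw [abs_neg]

lemma prod_zpow_sum {c : ℝ} (hc : c ≠ 0) (S : Finset ℤ) (f : ℤ → ℤ) :
    ∏ i ∈ S, c ^ f i = c ^ (∑ i ∈ S, f i) := by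
  classical
  induction S using Finset.cons_induction with
  | empty => simp
  | cons x S hx ih => rw [Finset.prod_cons, Finset.sum_cons, ih, zpow_add₀ hc]
lemma single_apply_int (m i : ℤ) : (((Finsupp.single m 1 : MIdx) i : ℤ)) = if i = m then 1 else 0 := by
  rw [Finsupp.single_apply]
  split_ifs with h h' h' <;> simp_all

lemma mom_add {m : ℤ} {A B α β α' β' : MIdx}
    (hA : α + α' = A + Finsupp.single m 1) (hB : β + β' = B + Finsupp.single m 1) :
    mom A B = mom α β + mom α' β' := by
  classical
  set S : Finset ℤ := (A.support ∪ B.support) ∪ ((α.support ∪ β.support) ∪ (α'.support ∪ β'.support)) with hS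
  rw [mom_eq_sum (S := S) (by intro z hz; exact Finset.mem_union.2 (Or.inl hz)),
      mom_eq_sum (S := S) (by intro z hz; exact Finset.mem_union.2 (Or.inr (Finset.mem_union.2 (Or.inl hz)))),
      mom_eq_sum (S := S) (by intro z hz; exact Finset.mem_union.2 (Or.inr (Finset.mem_union.2 (Or.inr hz)))),
      ← Finset.sum_add_distrib]
  apply Finset.sum_congr rfl
  intro i _
  have h1 : (α i : ℤ) + α' i = A i + ((Finsupp.single m 1 : MIdx) i : ℤ) := by
    have := congrArg (fun f : MIdx => (f i : ℤ)) hA; simpa using this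
  have h2 : (β i : ℤ) + β' i = B i + ((Finsupp.single m 1 : MIdx) i : ℤ) := by
    have := congrArg (fun f : MIdx => (f i : ℤ)) hB; simpa using this
  linear_combination (i : ℤ) * h2 - (i : ℤ) * h1

lemma Ew_add {m j x y : ℤ}
    (hE : ∀ i : ℤ, ((if i = x then (2:ℤ) else 0) + if i = y then 2 else 0)
        = ((if i = m then (2:ℤ) else 0) + if i = j then 2 else 0))
    {A B α β α' β' : MIdx}
    (hA : α + α' = A + Finsupp.single m 1) (hB : β + β' = B + Finsupp.single m 1)
    (i : ℤ) : Ew A B j i = Ew α β x i + Ew α' β' y i := by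
  have h1 : (α i : ℤ) + α' i = A i + ((Finsupp.single m 1 : MIdx) i : ℤ) := by
    have := congrArg (fun f : MIdx => (f i : ℤ)) hA; simpa using this
  have h2 : (β i : ℤ) + β' i = B i + ((Finsupp.single m 1 : MIdx) i : ℤ) := by
    have := congrArg (fun f : MIdx => (f i : ℤ)) hB; simpa using this
  rw [single_apply_int] at h1 h2
  have h3 := hE i
  unfold Ew
  split_ifs at h1 h2 h3 ⊢ <;> omega

lemma sum_Ew {x : ℤ} {α β : MIdx} {S : Finset ℤ}
    (h : insert x (α.support ∪ β.support) ⊆ S) :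
    ∑ i ∈ S, Ew α β x i = (deg α : ℤ) + (deg β : ℤ) - 2 := by
  classical
  have hxS : x ∈ S := h (Finset.mem_insert_self _ _)
  have hsupα : α.support ⊆ S := fun z hz => h (Finset.mem_insert_of_mem (Finset.mem_union.2 (Or.inl hz)))
  have hsupβ : β.support ⊆ S := fun z hz => h (Finset.mem_insert_of_mem (Finset.mem_union.2 (Or.inr hz)))
  unfold Ew
  rw [Finset.sum_sub_distrib, Finset.sum_add_distrib,
      Finset.sum_ite_eq' S x (fun _ => (2:ℤ)), if_pos hxS]
  have e1 : ∑ i ∈ S, (α i : ℤ) = (deg α : ℤ) := by rw [deg_eq_sum hsupα]; push_cast; ring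
  have e2 : ∑ i ∈ S, (β i : ℤ) = (deg β : ℤ) := by rw [deg_eq_sum hsupβ]; push_cast; ring
  rw [e1, e2]

lemma cwt_split {θ p a s η : ℝ} (hη : 0 ≤ η) {r r' : ℝ} (hr : 0 < r) (hrr' : r < r')
    {m j x y : ℤ}
    (hE : ∀ i : ℤ, ((if i = x then (2:ℤ) else 0) + if i = y then 2 else 0)
        = ((if i = m then (2:ℤ) else 0) + if i = j then 2 else 0))
    {A B α β α' β' : MIdx}
    (hA : α + α' = A + Finsupp.single m 1) (hB : β + β' = B + Finsupp.single m 1) :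
    cwt θ p a r s η j A B ≤
      (r/r') ^ ((deg α : ℤ) + (deg β : ℤ) - 2) * (r/r') ^ ((deg α' : ℤ) + (deg β' : ℤ) - 2) *
        (cwt θ p a r' s η x α β * cwt θ p a r' s η y α' β') := by
  classical
  have hr' : (0:ℝ) < r' := hr.trans hrr'
  have hδ : (0:ℝ) < r / r' := div_pos hr hr'
  set S : Finset ℤ := (insert j (A.support ∪ B.support)) ∪
      ((insert x (α.support ∪ β.support)) ∪ (insert y (α'.support ∪ β'.support))) with hS
  have hsub1 : insert j (A.support ∪ B.support) ⊆ S := Finset.subset_union_left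
  have hsub2 : insert x (α.support ∪ β.support) ⊆ S :=
    Finset.Subset.trans Finset.subset_union_left Finset.subset_union_right
  have hsub3 : insert y (α'.support ∪ β'.support) ⊆ S :=
    Finset.Subset.trans Finset.subset_union_right Finset.subset_union_right
  rw [cwt_eq_prod hr j A B hsub1, cwt_eq_prod hr' x α β hsub2, cwt_eq_prod hr' y α' β' hsub3]
  have hprod : ∏ i ∈ S, u0 θ p a r s i ^ Ew A B j i =
      ((r/r') ^ ((deg α : ℤ) + (deg β : ℤ) - 2) * ∏ i ∈ S, u0 θ p a r' s i ^ Ew α β x i) *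
      ((r/r') ^ ((deg α' : ℤ) + (deg β' : ℤ) - 2) * ∏ i ∈ S, u0 θ p a r' s i ^ Ew α' β' y i) := by
    have step1 : ∏ i ∈ S, u0 θ p a r s i ^ Ew A B j i =
        ∏ i ∈ S, ((r/r') ^ Ew α β x i * u0 θ p a r' s i ^ Ew α β x i) *
          ((r/r') ^ Ew α' β' y i * u0 θ p a r' s i ^ Ew α' β' y i) := by
      apply Finset.prod_congr rfl
      intro i _
      rw [Ew_add hE hA hB i, u0_scale hr'.ne' i,
          zpow_add₀ (mul_pos hδ (u0_pos hr' i)).ne', mul_zpow, mul_zpow]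
    rw [step1, Finset.prod_mul_distrib, Finset.prod_mul_distrib, Finset.prod_mul_distrib,
        prod_zpow_sum hδ.ne' S _, prod_zpow_sum hδ.ne' S _, sum_Ew hsub2, sum_Ew hsub3]
  rw [hprod]
  have hmom : mom A B = mom α β + mom α' β' := mom_add hA hB
  have hexp : Real.exp (η * |(mom A B : ℝ)|) ≤
      Real.exp (η * |(mom α β : ℝ)|) * Real.exp (η * |(mom α' β' : ℝ)|) := by
    rw [← Real.exp_add]
    apply Real.exp_le_exp.2
    rw [← mul_add]
    apply mul_le_mul_of_nonneg_left _ hη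
    rw [hmom]; push_cast; exact abs_add_le _ _
  have hP1 : (0:ℝ) ≤ (r/r') ^ ((deg α : ℤ) + (deg β : ℤ) - 2) * ∏ i ∈ S, u0 θ p a r' s i ^ Ew α β x i := by
    exact mul_nonneg (zpow_nonneg hδ.le _)
      (Finset.prod_nonneg fun i _ => (zpow_pos (u0_pos hr' i) _).le)
  have hP2 : (0:ℝ) ≤ (r/r') ^ ((deg α' : ℤ) + (deg β' : ℤ) - 2) * ∏ i ∈ S, u0 θ p a r' s i ^ Ew α' β' y i := by
    exact mul_nonneg (zpow_nonneg hδ.le _)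
      (Finset.prod_nonneg fun i _ => (zpow_pos (u0_pos hr' i) _).le)
  calc ((r/r') ^ ((deg α : ℤ) + (deg β : ℤ) - 2) * ∏ i ∈ S, u0 θ p a r' s i ^ Ew α β x i) *
        ((r/r') ^ ((deg α' : ℤ) + (deg β' : ℤ) - 2) * ∏ i ∈ S, u0 θ p a r' s i ^ Ew α' β' y i) *
        Real.exp (η * |(mom A B : ℝ)|)
      ≤ ((r/r') ^ ((deg α : ℤ) + (deg β : ℤ) - 2) * ∏ i ∈ S, u0 θ p a r' s i ^ Ew α β x i) *
        ((r/r') ^ ((deg α' : ℤ) + (deg β' : ℤ) - 2) * ∏ i ∈ S, u0 θ p a r' s i ^ Ew α' β' y i) *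
        (Real.exp (η * |(mom α β : ℝ)|) * Real.exp (η * |(mom α' β' : ℝ)|)) :=
        mul_le_mul_of_nonneg_left hexp (mul_nonneg hP1 hP2)
    _ = (r/r') ^ ((deg α : ℤ) + (deg β : ℤ) - 2) * (r/r') ^ ((deg α' : ℤ) + (deg β' : ℤ) - 2) *
        ((∏ i ∈ S, u0 θ p a r' s i ^ Ew α β x i) * Real.exp (η * |(mom α β : ℝ)|) *
         ((∏ i ∈ S, u0 θ p a r' s i ^ Ew α' β' y i) * Real.exp (η * |(mom α' β' : ℝ)|))) := by ring
lemma geom_term_le {y : ℝ} (h0 : 0 ≤ y) (h1 : y < 1) (n : ℕ) :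
    (n : ℝ) * y ^ (n - 1) ≤ (1 - y)⁻¹ := by
  rcases Nat.eq_zero_or_pos n with hn | hn
  · simp only [hn, Nat.cast_zero, zero_mul]
    exact inv_nonneg.2 (by linarith)
  have key : (n : ℝ) * y ^ (n - 1) ≤ ∑ i ∈ Finset.range n, y ^ i := by
    have : ∀ i ∈ Finset.range n, y ^ (n - 1) ≤ y ^ i := by
      intro i hi
      have hi' := Finset.mem_range.1 hi
      exact pow_le_pow_of_le_one h0 h1.le (by omega)
    calc (n : ℝ) * y ^ (n - 1) = ∑ _i ∈ Finset.range n, y ^ (n - 1) := by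
          rw [Finset.sum_const, Finset.card_range, nsmul_eq_mul]
      _ ≤ ∑ i ∈ Finset.range n, y ^ i := Finset.sum_le_sum this
  refine key.trans ?_
  have hy1 : y ≠ 1 := h1.ne
  rw [geom_sum_eq hy1, div_le_iff_of_neg (by linarith : y - 1 < 0)]
  have he : (1 - y)⁻¹ * (y - 1) = -1 := by
    field_simp
    ring
  rw [he]
  nlinarith [pow_nonneg h0 n]
lemma ofReal_norm_tsum_le {ι : Type*} (f : ι → ℂ) :
    ENNReal.ofReal ‖∑' i, f i‖ ≤ ∑' i, ENNReal.ofReal ‖f i‖ := by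
  by_cases h : Summable fun i => ‖f i‖
  · calc ENNReal.ofReal ‖∑' i, f i‖ ≤ ENNReal.ofReal (∑' i, ‖f i‖) :=
          ENNReal.ofReal_le_ofReal (norm_tsum_le_tsum_norm h)
      _ = ∑' i, ENNReal.ofReal ‖f i‖ :=
          ENNReal.ofReal_tsum_of_nonneg (fun i => norm_nonneg _) h
  · have : ∑' i, ENNReal.ofReal ‖f i‖ = ⊤ := by
      by_contra hne
      apply h
      have h2 : ∑' i, ((‖f i‖₊ : ℝ≥0∞)) ≠ ⊤ := by
        simp only [← enorm_eq_nnnorm, ← ofReal_norm]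
        exact hne
      have := ENNReal.tsum_coe_ne_top_iff_summable.1 h2
      exact NNReal.summable_coe.2 this
    rw [this]
    exact le_top

lemma deg_pos_of_apply {α : MIdx} {m : ℤ} (h : 1 ≤ α m) : 1 ≤ deg α := by
  have hm : m ∈ α.support := Finsupp.mem_support_iff.2 (by omega)
  have h2 : α m ≤ ∑ x ∈ α.support, α x := by
    simpa using Finset.single_le_sum (f := fun i => α i) (fun i _ => Nat.zero_le _) hm
  unfold deg; omega

lemma tsum_nat_apply (α : MIdx) : ∑' m : ℤ, ((α m : ℕ) : ℝ≥0∞) = (deg α : ℝ≥0∞) := by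
  rw [tsum_eq_sum (s := α.support) (fun b hb => by
    simp [apply_eq_zero_of_not_mem_support hb])]
  unfold deg
  push_cast
  rfl

lemma deg_eq_of_isHam {F : MIdx → MIdx → ℂ} (hF : IsHam F) {α β : MIdx} (h : F α β ≠ 0) :
    deg α = deg β := by
  by_contra hne
  exact h (hF.1 α β hne)

lemma norm_isHam_symm {F : MIdx → MIdx → ℂ} (hF : IsHam F) (α β : MIdx) :
    ‖F β α‖ = ‖F α β‖ := by
  rw [hF.2 α β]
  exact RCLike.norm_conj _

/-- symmetry of the majorant sum under `(α,β) ↦ (β,α)` with the `α`-weight. -/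
lemma tsum_alpha_weight {θ p a r s η : ℝ} {F : MIdx → MIdx → ℂ} (hF : IsHam F) (m : ℤ) :
    ∑' q : MIdx × MIdx, ENNReal.ofReal (‖F q.1 q.2‖ * ((q.1 m : ℕ) : ℝ) * cwt θ p a r s η m q.1 q.2)
      = ∑' q : MIdx × MIdx, ENNReal.ofReal (‖F q.1 q.2‖ * ((q.2 m : ℕ) : ℝ) * cwt θ p a r s η m q.1 q.2) := by
  rw [← Equiv.tsum_eq (Equiv.prodComm MIdx MIdx)
      (fun q : MIdx × MIdx => ENNReal.ofReal (‖F q.1 q.2‖ * ((q.1 m : ℕ) : ℝ) * cwt θ p a r s η m q.1 q.2))]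
  apply tsum_congr
  intro q
  simp only [Equiv.prodComm_apply, Prod.fst_swap, Prod.snd_swap]
  rw [norm_isHam_symm hF, cwt_symm]

lemma delta_pow_le_one {r ρ : ℝ} (hr : 0 < r) (hρ : 0 < ρ) {d e : ℕ} (hd : 1 ≤ d) (he : 1 ≤ e) :
    (r / (r + ρ)) ^ ((d : ℤ) + (e : ℤ) - 2) ≤ 1 := by
  have h0 : (0:ℝ) < r + ρ := by linarith
  have hδ0 : (0:ℝ) ≤ r / (r + ρ) := by positivity
  have hδ1 : r / (r + ρ) ≤ 1 := by
    rw [div_le_one h0]; linarith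
  have hexp : (d : ℤ) + (e : ℤ) - 2 = ((d + e - 2 : ℕ) : ℤ) := by omega
  rw [hexp, zpow_natCast]
  exact pow_le_one₀ hδ0 hδ1

lemma deg_delta_le {r ρ : ℝ} (hr : 0 < r) (hρ : 0 < ρ) {d : ℕ} (hd : 1 ≤ d) :
    (d : ℝ) * (r / (r + ρ)) ^ ((d : ℤ) + (d : ℤ) - 2) ≤ (r + ρ) / ρ := by
  have h0 : (0:ℝ) < r + ρ := by linarith
  have hδ0 : (0:ℝ) < r / (r + ρ) := by positivity
  have hδ1 : r / (r + ρ) < 1 := by rw [div_lt_one h0]; linarith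
  set δ := r / (r + ρ) with hδ
  have hexp : (d : ℤ) + (d : ℤ) - 2 = ((2 * (d - 1) : ℕ) : ℤ) := by omega
  rw [hexp, zpow_natCast, pow_mul]
  have hy0 : (0:ℝ) ≤ δ ^ 2 := by positivity
  have hy1 : δ ^ 2 < 1 := by nlinarith
  have key := geom_term_le hy0 hy1 d
  have hd1 : d - 1 = d - 1 := rfl
  calc (d : ℝ) * (δ ^ 2) ^ (d - 1) ≤ (1 - δ ^ 2)⁻¹ := key
    _ ≤ (1 - δ)⁻¹ := by
        apply inv_anti₀
        · linarith
        · nlinarith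
    _ = (r + ρ) / ρ := by
        rw [hδ]
        rw [show 1 - r / (r + ρ) = ρ / (r + ρ) by field_simp; ring]
        rw [inv_div]
/-- master majorant term. -/
def Vre (θ p a r s η : ℝ) (F G : MIdx → MIdx → ℂ) (j : ℤ)
    (t : ℤ × (MIdx × MIdx) × (MIdx × MIdx)) : ℝ :=
  ((t.2.1.1 t.1 * t.2.2.2 t.1 + t.2.1.2 t.1 * t.2.2.1 t.1 : ℕ) : ℝ) *
    (‖F t.2.1.1 t.2.1.2‖ * ‖G t.2.2.1 t.2.2.2‖) *
    (((t.2.1.2 + t.2.2.2 - Finsupp.single t.1 1 : MIdx) j : ℕ) : ℝ) *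
    cwt θ p a r s η j (t.2.1.1 + t.2.2.1 - Finsupp.single t.1 1)
      (t.2.1.2 + t.2.2.2 - Finsupp.single t.1 1)

lemma coef_norm_le (x y u v : ℕ) (Fv Gv : ℂ) :
    ‖Complex.I * ((x : ℂ) * (y : ℂ) - (u : ℂ) * (v : ℂ)) * Fv * Gv‖ ≤
      ((x * y + u * v : ℕ) : ℝ) * (‖Fv‖ * ‖Gv‖) := by
  rw [norm_mul, norm_mul, norm_mul, Complex.norm_I, one_mul]
  have h1 : ‖(x : ℂ) * (y : ℂ) - (u : ℂ) * (v : ℂ)‖ ≤ ((x * y + u * v : ℕ) : ℝ) := by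
    calc ‖(x : ℂ) * (y : ℂ) - (u : ℂ) * (v : ℂ)‖
        ≤ ‖(x : ℂ) * (y : ℂ)‖ + ‖(u : ℂ) * (v : ℂ)‖ := norm_sub_le _ _
      _ = ((x * y + u * v : ℕ) : ℝ) := by
          rw [norm_mul, norm_mul, Complex.norm_natCast, Complex.norm_natCast,
            Complex.norm_natCast, Complex.norm_natCast]
          push_cast; ring
  calc ‖(x : ℂ) * (y : ℂ) - (u : ℂ) * (v : ℂ)‖ * ‖Fv‖ * ‖Gv‖
      ≤ ((x * y + u * v : ℕ) : ℝ) * ‖Fv‖ * ‖Gv‖ := by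
        apply mul_le_mul_of_nonneg_right _ (norm_nonneg _)
        exact mul_le_mul_of_nonneg_right h1 (norm_nonneg _)
    _ = ((x * y + u * v : ℕ) : ℝ) * (‖Fv‖ * ‖Gv‖) := by ring

lemma hnorm_pois_le_master {θ p a r s η : ℝ} (hr : 0 < r) (F G : MIdx → MIdx → ℂ) :
    hnorm θ p a r s η (pois F G) ≤
      ⨆ j : ℤ, ∑' t : ℤ × (MIdx × MIdx) × (MIdx × MIdx),
        ENNReal.ofReal (Vre θ p a r s η F G j t) := by
  apply iSup_mono
  intro j
  -- abbreviations
  have step1 : ∀ q : MIdx × MIdx,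
      ENNReal.ofReal (‖pois F G q.1 q.2‖ * ((q.2 j : ℕ) : ℝ) * cwt θ p a r s η j q.1 q.2) ≤
      ∑' t : ℤ × (MIdx × MIdx) × (MIdx × MIdx),
        ENNReal.ofReal ‖if t.2.1.1 + t.2.2.1 = q.1 + Finsupp.single t.1 1 ∧
            t.2.1.2 + t.2.2.2 = q.2 + Finsupp.single t.1 1 then
          Complex.I * ((t.2.1.1 t.1 : ℂ) * (t.2.2.2 t.1 : ℂ) -
            (t.2.1.2 t.1 : ℂ) * (t.2.2.1 t.1 : ℂ)) * F t.2.1.1 t.2.1.2 * G t.2.2.1 t.2.2.2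
          else 0‖ *
        ENNReal.ofReal (((q.2 j : ℕ) : ℝ) * cwt θ p a r s η j q.1 q.2) := by
    intro q
    have e1 : ‖pois F G q.1 q.2‖ * ((q.2 j : ℕ) : ℝ) * cwt θ p a r s η j q.1 q.2
        = ‖pois F G q.1 q.2‖ * (((q.2 j : ℕ) : ℝ) * cwt θ p a r s η j q.1 q.2) := by ring
    rw [e1, ENNReal.ofReal_mul (norm_nonneg _)]
    rw [ENNReal.tsum_mul_right]
    apply mul_le_mul_left
    exact ofReal_norm_tsum_le _
  calc ∑' q : MIdx × MIdx,
        ENNReal.ofReal (‖pois F G q.1 q.2‖ * ((q.2 j : ℕ) : ℝ) * cwt θ p a r s η j q.1 q.2)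
      ≤ ∑' q : MIdx × MIdx, ∑' t : ℤ × (MIdx × MIdx) × (MIdx × MIdx),
        ENNReal.ofReal ‖if t.2.1.1 + t.2.2.1 = q.1 + Finsupp.single t.1 1 ∧
            t.2.1.2 + t.2.2.2 = q.2 + Finsupp.single t.1 1 then
          Complex.I * ((t.2.1.1 t.1 : ℂ) * (t.2.2.2 t.1 : ℂ) -
            (t.2.1.2 t.1 : ℂ) * (t.2.2.1 t.1 : ℂ)) * F t.2.1.1 t.2.1.2 * G t.2.2.1 t.2.2.2
          else 0‖ *
        ENNReal.ofReal (((q.2 j : ℕ) : ℝ) * cwt θ p a r s η j q.1 q.2) :=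
        Summable.tsum_le_tsum step1 ENNReal.summable ENNReal.summable
    _ = ∑' t : ℤ × (MIdx × MIdx) × (MIdx × MIdx), ∑' q : MIdx × MIdx,
        ENNReal.ofReal ‖if t.2.1.1 + t.2.2.1 = q.1 + Finsupp.single t.1 1 ∧
            t.2.1.2 + t.2.2.2 = q.2 + Finsupp.single t.1 1 then
          Complex.I * ((t.2.1.1 t.1 : ℂ) * (t.2.2.2 t.1 : ℂ) -
            (t.2.1.2 t.1 : ℂ) * (t.2.2.1 t.1 : ℂ)) * F t.2.1.1 t.2.1.2 * G t.2.2.1 t.2.2.2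
          else 0‖ *
        ENNReal.ofReal (((q.2 j : ℕ) : ℝ) * cwt θ p a r s η j q.1 q.2) := ENNReal.tsum_comm
    _ ≤ ∑' t : ℤ × (MIdx × MIdx) × (MIdx × MIdx),
        ENNReal.ofReal (Vre θ p a r s η F G j t) := by
        apply ENNReal.tsum_le_tsum
        intro t
        obtain ⟨m, ⟨⟨α, β⟩, ⟨α', β'⟩⟩⟩ := t
        simp only
        have key : ∀ q : MIdx × MIdx,
            ENNReal.ofReal ‖if α + α' = q.1 + Finsupp.single m 1 ∧
                β + β' = q.2 + Finsupp.single m 1 then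
              Complex.I * ((α m : ℂ) * (β' m : ℂ) - (β m : ℂ) * (α' m : ℂ)) * F α β * G α' β'
              else 0‖ *
            ENNReal.ofReal (((q.2 j : ℕ) : ℝ) * cwt θ p a r s η j q.1 q.2) ≤
            if q = (α + α' - Finsupp.single m 1, β + β' - Finsupp.single m 1) then
              ENNReal.ofReal (Vre θ p a r s η F G j (m, (α, β), (α', β'))) else 0 := by
          intro q
          by_cases hc : α + α' = q.1 + Finsupp.single m 1 ∧ β + β' = q.2 + Finsupp.single m 1
          · have hq1 : q.1 = α + α' - Finsupp.single m 1 := by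
              rw [hc.1, add_tsub_cancel_right]
            have hq2 : q.2 = β + β' - Finsupp.single m 1 := by
              rw [hc.2, add_tsub_cancel_right]
            have hq : q = (α + α' - Finsupp.single m 1, β + β' - Finsupp.single m 1) :=
              Prod.ext hq1 hq2
            rw [if_pos hc, if_pos hq, hq1, hq2]
            rw [← ENNReal.ofReal_mul (norm_nonneg _)]
            apply ENNReal.ofReal_le_ofReal
            unfold Vre
            simp only
            have hnn : (0:ℝ) ≤ (((β + β' - Finsupp.single m 1 : MIdx) j : ℕ) : ℝ) *
                cwt θ p a r s η j (α + α' - Finsupp.single m 1) (β + β' - Finsupp.single m 1) :=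
              mul_nonneg (Nat.cast_nonneg _) (cwt_pos hr j _ _).le
            calc ‖Complex.I * ((α m : ℂ) * (β' m : ℂ) - (β m : ℂ) * (α' m : ℂ)) * F α β * G α' β'‖ *
                  ((((β + β' - Finsupp.single m 1 : MIdx) j : ℕ) : ℝ) *
                    cwt θ p a r s η j (α + α' - Finsupp.single m 1) (β + β' - Finsupp.single m 1))
                ≤ ((α m * β' m + β m * α' m : ℕ) : ℝ) * (‖F α β‖ * ‖G α' β'‖) *
                  ((((β + β' - Finsupp.single m 1 : MIdx) j : ℕ) : ℝ) *
                    cwt θ p a r s η j (α + α' - Finsupp.single m 1) (β + β' - Finsupp.single m 1)) :=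
                  mul_le_mul_of_nonneg_right (coef_norm_le _ _ _ _ _ _) hnn
              _ = ((α m * β' m + β m * α' m : ℕ) : ℝ) * (‖F α β‖ * ‖G α' β'‖) *
                  (((β + β' - Finsupp.single m 1 : MIdx) j : ℕ) : ℝ) *
                    cwt θ p a r s η j (α + α' - Finsupp.single m 1) (β + β' - Finsupp.single m 1) := by
                  ring
          · rw [if_neg hc]
            simp
        calc ∑' q : MIdx × MIdx,
            ENNReal.ofReal ‖if α + α' = q.1 + Finsupp.single m 1 ∧
                β + β' = q.2 + Finsupp.single m 1 then
              Complex.I * ((α m : ℂ) * (β' m : ℂ) - (β m : ℂ) * (α' m : ℂ)) * F α β * G α' β'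
              else 0‖ *
            ENNReal.ofReal (((q.2 j : ℕ) : ℝ) * cwt θ p a r s η j q.1 q.2)
            ≤ ∑' q : MIdx × MIdx,
              if q = (α + α' - Finsupp.single m 1, β + β' - Finsupp.single m 1) then
                ENNReal.ofReal (Vre θ p a r s η F G j (m, (α, β), (α', β'))) else 0 :=
              ENNReal.tsum_le_tsum key
          _ = ENNReal.ofReal (Vre θ p a r s η F G j (m, (α, β), (α', β'))) := tsum_ite_eq _ _
def dpow (r ρ : ℝ) (α β : MIdx) : ℝ := (r / (r + ρ)) ^ ((deg α : ℤ) + (deg β : ℤ) - 2)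

def sv1 (θ p a r ρ s η : ℝ) (F G : MIdx → MIdx → ℂ) (j : ℤ)
    (t : ℤ × (MIdx × MIdx) × (MIdx × MIdx)) : ℝ :=
  (‖F t.2.1.1 t.2.1.2‖ * ((t.2.1.2 j : ℕ) : ℝ) * cwt θ p a (r+ρ) s η j t.2.1.1 t.2.1.2) *
    (((t.2.1.1 t.1 : ℕ) : ℝ) * dpow r ρ t.2.1.1 t.2.1.2) *
    ((‖G t.2.2.1 t.2.2.2‖ * ((t.2.2.2 t.1 : ℕ) : ℝ) * cwt θ p a (r+ρ) s η t.1 t.2.2.1 t.2.2.2) *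
      dpow r ρ t.2.2.1 t.2.2.2)

def sv2 (θ p a r ρ s η : ℝ) (F G : MIdx → MIdx → ℂ) (j : ℤ)
    (t : ℤ × (MIdx × MIdx) × (MIdx × MIdx)) : ℝ :=
  (‖F t.2.1.1 t.2.1.2‖ * ((t.2.1.1 t.1 : ℕ) : ℝ) * cwt θ p a (r+ρ) s η t.1 t.2.1.1 t.2.1.2) *
    dpow r ρ t.2.1.1 t.2.1.2 *
    ((‖G t.2.2.1 t.2.2.2‖ * ((t.2.2.2 j : ℕ) : ℝ) * cwt θ p a (r+ρ) s η j t.2.2.1 t.2.2.2) *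
      (((t.2.2.2 t.1 : ℕ) : ℝ) * dpow r ρ t.2.2.1 t.2.2.2))

def sv3 (θ p a r ρ s η : ℝ) (F G : MIdx → MIdx → ℂ) (j : ℤ)
    (t : ℤ × (MIdx × MIdx) × (MIdx × MIdx)) : ℝ :=
  (‖F t.2.1.1 t.2.1.2‖ * ((t.2.1.2 j : ℕ) : ℝ) * cwt θ p a (r+ρ) s η j t.2.1.1 t.2.1.2) *
    (((t.2.1.2 t.1 : ℕ) : ℝ) * dpow r ρ t.2.1.1 t.2.1.2) *
    ((‖G t.2.2.1 t.2.2.2‖ * ((t.2.2.1 t.1 : ℕ) : ℝ) * cwt θ p a (r+ρ) s η t.1 t.2.2.1 t.2.2.2) *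
      dpow r ρ t.2.2.1 t.2.2.2)

def sv4 (θ p a r ρ s η : ℝ) (F G : MIdx → MIdx → ℂ) (j : ℤ)
    (t : ℤ × (MIdx × MIdx) × (MIdx × MIdx)) : ℝ :=
  (‖F t.2.1.1 t.2.1.2‖ * ((t.2.1.2 t.1 : ℕ) : ℝ) * cwt θ p a (r+ρ) s η t.1 t.2.1.1 t.2.1.2) *
    dpow r ρ t.2.1.1 t.2.1.2 *
    ((‖G t.2.2.1 t.2.2.2‖ * ((t.2.2.2 j : ℕ) : ℝ) * cwt θ p a (r+ρ) s η j t.2.2.1 t.2.2.2) *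
      (((t.2.2.1 t.1 : ℕ) : ℝ) * dpow r ρ t.2.2.1 t.2.2.2))

lemma Vre_le_sv {θ p a r ρ s η : ℝ} (hr : 0 < r) (hρ : 0 < ρ) (hη : 0 ≤ η)
    {F G : MIdx → MIdx → ℂ} (hF : IsHam F) (hG : IsHam G) (j : ℤ)
    (t : ℤ × (MIdx × MIdx) × (MIdx × MIdx)) :
    Vre θ p a r s η F G j t ≤
      sv1 θ p a r ρ s η F G j t + sv2 θ p a r ρ s η F G j t +
      sv3 θ p a r ρ s η F G j t + sv4 θ p a r ρ s η F G j t := by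
  obtain ⟨m, ⟨⟨α, β⟩, ⟨α', β'⟩⟩⟩ := t
  have hr' : (0:ℝ) < r + ρ := by linarith
  have hδnn : (0:ℝ) ≤ r / (r + ρ) := by positivity
  -- nonnegativity of the four upper-bound terms
  have hsv1 : 0 ≤ sv1 θ p a r ρ s η F G j (m, (α, β), (α', β')) := by
    unfold sv1 dpow
    have := (cwt_pos (θ := θ) (p := p) (a := a) (s := s) (η := η) hr' j α β).le
    have := (cwt_pos (θ := θ) (p := p) (a := a) (s := s) (η := η) hr' m α' β').le
    simp only
    repeat' apply mul_nonneg
    all_goals first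
      | positivity
      | assumption
      | exact zpow_nonneg hδnn _
      | exact Finset.prod_nonneg fun i _ => (zpow_pos (u0_pos hr' i) _).le
  have hsv2 : 0 ≤ sv2 θ p a r ρ s η F G j (m, (α, β), (α', β')) := by
    unfold sv2 dpow
    have := (cwt_pos (θ := θ) (p := p) (a := a) (s := s) (η := η) hr' m α β).le
    have := (cwt_pos (θ := θ) (p := p) (a := a) (s := s) (η := η) hr' j α' β').le
    simp only
    repeat' apply mul_nonneg
    all_goals first
      | positivity
      | assumption
      | exact zpow_nonneg hδnn _
      | exact Finset.prod_nonneg fun i _ => (zpow_pos (u0_pos hr' i) _).le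
  have hsv3 : 0 ≤ sv3 θ p a r ρ s η F G j (m, (α, β), (α', β')) := by
    unfold sv3 dpow
    have := (cwt_pos (θ := θ) (p := p) (a := a) (s := s) (η := η) hr' j α β).le
    have := (cwt_pos (θ := θ) (p := p) (a := a) (s := s) (η := η) hr' m α' β').le
    simp only
    repeat' apply mul_nonneg
    all_goals first
      | positivity
      | assumption
      | exact zpow_nonneg hδnn _
      | exact Finset.prod_nonneg fun i _ => (zpow_pos (u0_pos hr' i) _).le
  have hsv4 : 0 ≤ sv4 θ p a r ρ s η F G j (m, (α, β), (α', β')) := by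
    unfold sv4 dpow
    have := (cwt_pos (θ := θ) (p := p) (a := a) (s := s) (η := η) hr' m α β).le
    have := (cwt_pos (θ := θ) (p := p) (a := a) (s := s) (η := η) hr' j α' β').le
    simp only
    repeat' apply mul_nonneg
    all_goals first
      | positivity
      | assumption
      | exact zpow_nonneg hδnn _
      | exact Finset.prod_nonneg fun i _ => (zpow_pos (u0_pos hr' i) _).le
  -- degenerate cases
  by_cases hF0 : F α β = 0
  · unfold Vre; simp only [hF0]
    simp only [norm_zero, zero_mul, mul_zero, zero_mul]
    linarith
  by_cases hG0 : G α' β' = 0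
  · unfold Vre; simp only [hG0]
    simp only [norm_zero, mul_zero, zero_mul, mul_zero]
    linarith
  by_cases hcnt : α m * β' m + β m * α' m = 0
  · unfold Vre; simp only
    rw [hcnt]
    simp only [Nat.cast_zero, zero_mul]
    linarith
  -- main case
  have hdF : deg α = deg β := deg_eq_of_isHam hF hF0
  have hdG : deg α' = deg β' := deg_eq_of_isHam hG hG0
  have hcase : (1 ≤ α m ∧ 1 ≤ β' m) ∨ (1 ≤ β m ∧ 1 ≤ α' m) := by
    rcases Nat.eq_zero_or_pos (α m * β' m) with h1 | h1
    · right
      have h2 : β m * α' m ≠ 0 := by omega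
      obtain ⟨ha, hb⟩ := Nat.mul_ne_zero_iff.1 h2
      exact ⟨Nat.one_le_iff_ne_zero.2 ha, Nat.one_le_iff_ne_zero.2 hb⟩
    · left
      obtain ⟨ha, hb⟩ := Nat.mul_ne_zero_iff.1 (Nat.pos_iff_ne_zero.1 h1)
      exact ⟨Nat.one_le_iff_ne_zero.2 ha, Nat.one_le_iff_ne_zero.2 hb⟩
  have hdegα : 1 ≤ deg α := by
    rcases hcase with ⟨h1, _⟩ | ⟨h1, _⟩
    · exact deg_pos_of_apply h1
    · rw [hdF]; exact deg_pos_of_apply h1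
  have hdegβ : 1 ≤ deg β := hdF ▸ hdegα
  have hdegα' : 1 ≤ deg α' := by
    rcases hcase with ⟨_, h1⟩ | ⟨_, h1⟩
    · rw [hdG]; exact deg_pos_of_apply h1
    · exact deg_pos_of_apply h1
  have hdegβ' : 1 ≤ deg β' := hdG ▸ hdegα'
  have hm1 : 1 ≤ (α + α') m := by
    rw [Finsupp.add_apply]; omega
  have hm2 : 1 ≤ (β + β') m := by
    rw [Finsupp.add_apply]; omega
  have hA : α + α' = (α + α' - Finsupp.single m 1) + Finsupp.single m 1 :=
    (tsub_add_cancel_of_le (Finsupp.single_le_iff.2 hm1)).symm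
  have hB : β + β' = (β + β' - Finsupp.single m 1) + Finsupp.single m 1 :=
    (tsub_add_cancel_of_le (Finsupp.single_le_iff.2 hm2)).symm
  have hrr' : r < r + ρ := by linarith
  have hE1 : ∀ i : ℤ, ((if i = j then (2:ℤ) else 0) + if i = m then 2 else 0)
      = ((if i = m then (2:ℤ) else 0) + if i = j then 2 else 0) := fun i => by ring
  have hE2 : ∀ i : ℤ, ((if i = m then (2:ℤ) else 0) + if i = j then 2 else 0)
      = ((if i = m then (2:ℤ) else 0) + if i = j then 2 else 0) := fun i => rfl
  have split1 := cwt_split (θ := θ) (p := p) (a := a) (s := s) hη hr hrr' hE1 hA hB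
  have split2 := cwt_split (θ := θ) (p := p) (a := a) (s := s) hη hr hrr' hE2 hA hB
  -- notation
  set B0 : MIdx := β + β' - Finsupp.single m 1 with hB0
  set A0 : MIdx := α + α' - Finsupp.single m 1 with hA0
  have hBj : ((B0 j : ℕ) : ℝ) ≤ ((β j : ℕ) : ℝ) + ((β' j : ℕ) : ℝ) := by
    have : B0 j ≤ β j + β' j := by
      rw [hB0, Finsupp.tsub_apply, Finsupp.add_apply]
      omega
    push_cast
    exact_mod_cast this
  have hc0 : (0:ℝ) ≤ cwt θ p a r s η j A0 B0 := (cwt_pos hr j A0 B0).le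
  set K1 : ℝ := (r/(r+ρ)) ^ ((deg α : ℤ) + (deg β : ℤ) - 2) *
      (r/(r+ρ)) ^ ((deg α' : ℤ) + (deg β' : ℤ) - 2) *
      (cwt θ p a (r+ρ) s η j α β * cwt θ p a (r+ρ) s η m α' β') with hK1
  set K2 : ℝ := (r/(r+ρ)) ^ ((deg α : ℤ) + (deg β : ℤ) - 2) *
      (r/(r+ρ)) ^ ((deg α' : ℤ) + (deg β' : ℤ) - 2) *
      (cwt θ p a (r+ρ) s η m α β * cwt θ p a (r+ρ) s η j α' β') with hK2
  have hsplit1 : cwt θ p a r s η j A0 B0 ≤ K1 := split1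
  have hsplit2 : cwt θ p a r s η j A0 B0 ≤ K2 := split2
  have hP : (0:ℝ) ≤ (((α m : ℕ) : ℝ) * ((β' m : ℕ) : ℝ) + ((β m : ℕ) : ℝ) * ((α' m : ℕ) : ℝ)) *
      (‖F α β‖ * ‖G α' β'‖) := by positivity
  calc Vre θ p a r s η F G j (m, (α, β), (α', β'))
      = ((((α m : ℕ) : ℝ) * ((β' m : ℕ) : ℝ) + ((β m : ℕ) : ℝ) * ((α' m : ℕ) : ℝ)) *
          (‖F α β‖ * ‖G α' β'‖)) * (((B0 j : ℕ) : ℝ) * cwt θ p a r s η j A0 B0) := by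
        unfold Vre
        simp only
        rw [← hA0, ← hB0]
        simp only [Nat.cast_add, Nat.cast_mul]
        ring
    _ ≤ ((((α m : ℕ) : ℝ) * ((β' m : ℕ) : ℝ) + ((β m : ℕ) : ℝ) * ((α' m : ℕ) : ℝ)) *
          (‖F α β‖ * ‖G α' β'‖)) *
        ((((β j : ℕ) : ℝ) + ((β' j : ℕ) : ℝ)) * cwt θ p a r s η j A0 B0) := by
        apply mul_le_mul_of_nonneg_left _ hP
        exact mul_le_mul_of_nonneg_right hBj hc0
    _ = ((((α m : ℕ) : ℝ) * ((β' m : ℕ) : ℝ) + ((β m : ℕ) : ℝ) * ((α' m : ℕ) : ℝ)) *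
          (‖F α β‖ * ‖G α' β'‖)) *
        (((β j : ℕ) : ℝ) * cwt θ p a r s η j A0 B0 + ((β' j : ℕ) : ℝ) * cwt θ p a r s η j A0 B0) := by
        ring
    _ ≤ ((((α m : ℕ) : ℝ) * ((β' m : ℕ) : ℝ) + ((β m : ℕ) : ℝ) * ((α' m : ℕ) : ℝ)) *
          (‖F α β‖ * ‖G α' β'‖)) *
        (((β j : ℕ) : ℝ) * K1 + ((β' j : ℕ) : ℝ) * K2) := by
        apply mul_le_mul_of_nonneg_left _ hP
        exact add_le_add (mul_le_mul_of_nonneg_left hsplit1 (Nat.cast_nonneg _))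
          (mul_le_mul_of_nonneg_left hsplit2 (Nat.cast_nonneg _))
    _ = sv1 θ p a r ρ s η F G j (m, (α, β), (α', β')) + sv2 θ p a r ρ s η F G j (m, (α, β), (α', β')) +
        sv3 θ p a r ρ s η F G j (m, (α, β), (α', β')) + sv4 θ p a r ρ s η F G j (m, (α, β), (α', β')) := by
        unfold sv1 sv2 sv3 sv4 dpow
        simp only [hK1, hK2]
        ring
lemma dpow_nonneg {r ρ : ℝ} (hr : 0 < r) (hρ : 0 < ρ) (α β : MIdx) : 0 ≤ dpow r ρ α β :=
  zpow_nonneg (by positivity) _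

lemma term_drop_dpow_snd {θ p a r ρ s η : ℝ} (hr : 0 < r) (hρ : 0 < ρ)
    {H : MIdx → MIdx → ℂ} (hH : IsHam H) (m : ℤ) (q : MIdx × MIdx) :
    ENNReal.ofReal ((‖H q.1 q.2‖ * ((q.2 m : ℕ) : ℝ) * cwt θ p a (r+ρ) s η m q.1 q.2) *
        dpow r ρ q.1 q.2) ≤
      ENNReal.ofReal (‖H q.1 q.2‖ * ((q.2 m : ℕ) : ℝ) * cwt θ p a (r+ρ) s η m q.1 q.2) := by
  by_cases hH0 : H q.1 q.2 = 0
  · simp [hH0]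
  by_cases hw : q.2 m = 0
  · simp [hw]
  have hd : deg q.1 = deg q.2 := deg_eq_of_isHam hH hH0
  have hd2 : 1 ≤ deg q.2 := deg_pos_of_apply (Nat.one_le_iff_ne_zero.2 hw)
  have hd1 : 1 ≤ deg q.1 := hd ▸ hd2
  apply ENNReal.ofReal_le_ofReal
  apply mul_le_of_le_one_right
  · have := (cwt_pos (θ := θ) (p := p) (a := a) (s := s) (η := η)
      (by linarith : (0:ℝ) < r + ρ) m q.1 q.2).le
    positivity
  · exact delta_pow_le_one hr hρ hd1 hd2

lemma term_drop_dpow_fst {θ p a r ρ s η : ℝ} (hr : 0 < r) (hρ : 0 < ρ)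
    {H : MIdx → MIdx → ℂ} (hH : IsHam H) (m : ℤ) (q : MIdx × MIdx) :
    ENNReal.ofReal ((‖H q.1 q.2‖ * ((q.1 m : ℕ) : ℝ) * cwt θ p a (r+ρ) s η m q.1 q.2) *
        dpow r ρ q.1 q.2) ≤
      ENNReal.ofReal (‖H q.1 q.2‖ * ((q.1 m : ℕ) : ℝ) * cwt θ p a (r+ρ) s η m q.1 q.2) := by
  by_cases hH0 : H q.1 q.2 = 0
  · simp [hH0]
  by_cases hw : q.1 m = 0
  · simp [hw]
  have hd : deg q.1 = deg q.2 := deg_eq_of_isHam hH hH0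
  have hd1 : 1 ≤ deg q.1 := deg_pos_of_apply (Nat.one_le_iff_ne_zero.2 hw)
  have hd2 : 1 ≤ deg q.2 := hd ▸ hd1
  apply ENNReal.ofReal_le_ofReal
  apply mul_le_of_le_one_right
  · have := (cwt_pos (θ := θ) (p := p) (a := a) (s := s) (η := η)
      (by linarith : (0:ℝ) < r + ρ) m q.1 q.2).le
    positivity
  · exact delta_pow_le_one hr hρ hd1 hd2

/-- the `m`-summed, `dpow`-damped `G`-factor is bounded by the norm: `β`-weight version. -/
lemma inner_sum_le_hnorm_snd {θ p a r ρ s η : ℝ} (hr : 0 < r) (hρ : 0 < ρ)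
    {H : MIdx → MIdx → ℂ} (hH : IsHam H) (m : ℤ) :
    ∑' q : MIdx × MIdx,
      ENNReal.ofReal ((‖H q.1 q.2‖ * ((q.2 m : ℕ) : ℝ) * cwt θ p a (r+ρ) s η m q.1 q.2) *
        dpow r ρ q.1 q.2) ≤ hnorm θ p a (r+ρ) s η H := by
  calc ∑' q : MIdx × MIdx,
      ENNReal.ofReal ((‖H q.1 q.2‖ * ((q.2 m : ℕ) : ℝ) * cwt θ p a (r+ρ) s η m q.1 q.2) *
        dpow r ρ q.1 q.2)
      ≤ ∑' q : MIdx × MIdx,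
        ENNReal.ofReal (‖H q.1 q.2‖ * ((q.2 m : ℕ) : ℝ) * cwt θ p a (r+ρ) s η m q.1 q.2) :=
        ENNReal.tsum_le_tsum (term_drop_dpow_snd hr hρ hH m)
    _ ≤ hnorm θ p a (r+ρ) s η H := le_iSup (fun i : ℤ => ∑' q : MIdx × MIdx,
        ENNReal.ofReal (‖H q.1 q.2‖ * ((q.2 i : ℕ) : ℝ) * cwt θ p a (r+ρ) s η i q.1 q.2)) m

/-- the `m`-summed, `dpow`-damped `G`-factor: `α`-weight version. -/
lemma inner_sum_le_hnorm_fst {θ p a r ρ s η : ℝ} (hr : 0 < r) (hρ : 0 < ρ)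
    {H : MIdx → MIdx → ℂ} (hH : IsHam H) (m : ℤ) :
    ∑' q : MIdx × MIdx,
      ENNReal.ofReal ((‖H q.1 q.2‖ * ((q.1 m : ℕ) : ℝ) * cwt θ p a (r+ρ) s η m q.1 q.2) *
        dpow r ρ q.1 q.2) ≤ hnorm θ p a (r+ρ) s η H := by
  calc ∑' q : MIdx × MIdx,
      ENNReal.ofReal ((‖H q.1 q.2‖ * ((q.1 m : ℕ) : ℝ) * cwt θ p a (r+ρ) s η m q.1 q.2) *
        dpow r ρ q.1 q.2)
      ≤ ∑' q : MIdx × MIdx,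
        ENNReal.ofReal (‖H q.1 q.2‖ * ((q.1 m : ℕ) : ℝ) * cwt θ p a (r+ρ) s η m q.1 q.2) :=
        ENNReal.tsum_le_tsum (term_drop_dpow_fst hr hρ hH m)
    _ = ∑' q : MIdx × MIdx,
        ENNReal.ofReal (‖H q.1 q.2‖ * ((q.2 m : ℕ) : ℝ) * cwt θ p a (r+ρ) s η m q.1 q.2) :=
        tsum_alpha_weight hH m
    _ ≤ hnorm θ p a (r+ρ) s η H := le_iSup (fun i : ℤ => ∑' q : MIdx × MIdx,
        ENNReal.ofReal (‖H q.1 q.2‖ * ((q.2 i : ℕ) : ℝ) * cwt θ p a (r+ρ) s η i q.1 q.2)) m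

lemma term_deg_dpow {θ p a r ρ s η : ℝ} (hr : 0 < r) (hρ : 0 < ρ)
    {H : MIdx → MIdx → ℂ} (hH : IsHam H) (j : ℤ) (q : MIdx × MIdx) {d : ℕ}
    (hd : d = deg q.1 ∨ d = deg q.2) :
    (d : ℝ≥0∞) * ENNReal.ofReal ((‖H q.1 q.2‖ * ((q.2 j : ℕ) : ℝ) *
        cwt θ p a (r+ρ) s η j q.1 q.2) * dpow r ρ q.1 q.2) ≤
      ENNReal.ofReal ((r+ρ)/ρ) *
        ENNReal.ofReal (‖H q.1 q.2‖ * ((q.2 j : ℕ) : ℝ) * cwt θ p a (r+ρ) s η j q.1 q.2) := by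
  by_cases hH0 : H q.1 q.2 = 0
  · simp [hH0]
  by_cases hw : q.2 j = 0
  · simp [hw]
  have hdeq : deg q.1 = deg q.2 := deg_eq_of_isHam hH hH0
  have hd2 : 1 ≤ deg q.2 := deg_pos_of_apply (Nat.one_le_iff_ne_zero.2 hw)
  have hd1 : 1 ≤ deg q.1 := hdeq ▸ hd2
  have hdd : d = deg q.1 := by rcases hd with h | h; exacts [h, by rw [h, hdeq]]
  have hcnn : (0:ℝ) ≤ ‖H q.1 q.2‖ * ((q.2 j : ℕ) : ℝ) * cwt θ p a (r+ρ) s η j q.1 q.2 := by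
    have := (cwt_pos (θ := θ) (p := p) (a := a) (s := s) (η := η)
      (by linarith : (0:ℝ) < r + ρ) j q.1 q.2).le
    positivity
  rw [← ENNReal.ofReal_natCast d, ← ENNReal.ofReal_mul (Nat.cast_nonneg d),
      ← ENNReal.ofReal_mul (by positivity : (0:ℝ) ≤ (r+ρ)/ρ)]
  apply ENNReal.ofReal_le_ofReal
  have hkey : (d : ℝ) * dpow r ρ q.1 q.2 ≤ (r+ρ)/ρ := by
    unfold dpow
    rw [hdd, ← hdeq]
    exact deg_delta_le hr hρ hd1
  calc (d : ℝ) * ((‖H q.1 q.2‖ * ((q.2 j : ℕ) : ℝ) * cwt θ p a (r+ρ) s η j q.1 q.2) *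
        dpow r ρ q.1 q.2)
      = (‖H q.1 q.2‖ * ((q.2 j : ℕ) : ℝ) * cwt θ p a (r+ρ) s η j q.1 q.2) *
        ((d : ℝ) * dpow r ρ q.1 q.2) := by ring
    _ ≤ (‖H q.1 q.2‖ * ((q.2 j : ℕ) : ℝ) * cwt θ p a (r+ρ) s η j q.1 q.2) * ((r+ρ)/ρ) :=
        mul_le_mul_of_nonneg_left hkey hcnn
    _ = (r+ρ)/ρ * (‖H q.1 q.2‖ * ((q.2 j : ℕ) : ℝ) * cwt θ p a (r+ρ) s η j q.1 q.2) := by ring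
lemma sv1_bound {θ p a r ρ s η : ℝ} (hr : 0 < r) (hρ : 0 < ρ)
    {F G : MIdx → MIdx → ℂ} (hF : IsHam F) (hG : IsHam G) (j : ℤ) :
    ∑' t : ℤ × (MIdx × MIdx) × (MIdx × MIdx), ENNReal.ofReal (sv1 θ p a r ρ s η F G j t) ≤
      ENNReal.ofReal ((r+ρ)/ρ) * hnorm θ p a (r+ρ) s η F * hnorm θ p a (r+ρ) s η G := by
  have hr' : (0:ℝ) < r + ρ := by linarith
  set NG := hnorm θ p a (r+ρ) s η G with hNG
  set NF := hnorm θ p a (r+ρ) s η F with hNF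
  calc ∑' t : ℤ × (MIdx × MIdx) × (MIdx × MIdx), ENNReal.ofReal (sv1 θ p a r ρ s η F G j t)
      = ∑' (m : ℤ) (qq : (MIdx × MIdx) × (MIdx × MIdx)),
          ENNReal.ofReal (sv1 θ p a r ρ s η F G j (m, qq)) :=
        ENNReal.tsum_prod
        (f := fun m qq => ENNReal.ofReal (sv1 θ p a r ρ s η F G j (m, qq)))
    _ = ∑' (m : ℤ) (qF : MIdx × MIdx) (qG : MIdx × MIdx),
          ENNReal.ofReal (sv1 θ p a r ρ s η F G j (m, (qF, qG))) :=
        tsum_congr fun m => ENNReal.tsum_prod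
          (f := fun qF qG => ENNReal.ofReal (sv1 θ p a r ρ s η F G j (m, (qF, qG))))
    _ = ∑' (m : ℤ) (qF : MIdx × MIdx),
          (ENNReal.ofReal ((‖F qF.1 qF.2‖ * ((qF.2 j : ℕ) : ℝ) * cwt θ p a (r+ρ) s η j qF.1 qF.2) *
              dpow r ρ qF.1 qF.2) * ((qF.1 m : ℕ) : ℝ≥0∞) *
            ∑' qG : MIdx × MIdx,
              ENNReal.ofReal ((‖G qG.1 qG.2‖ * ((qG.2 m : ℕ) : ℝ) * cwt θ p a (r+ρ) s η m qG.1 qG.2) *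
                dpow r ρ qG.1 qG.2)) := by
        apply tsum_congr; intro m; apply tsum_congr; intro qF
        rw [← ENNReal.tsum_mul_left]
        apply tsum_congr; intro qG
        unfold sv1
        simp only
        rw [show (‖F qF.1 qF.2‖ * ((qF.2 j : ℕ) : ℝ) * cwt θ p a (r+ρ) s η j qF.1 qF.2) *
              (((qF.1 m : ℕ) : ℝ) * dpow r ρ qF.1 qF.2) *
              ((‖G qG.1 qG.2‖ * ((qG.2 m : ℕ) : ℝ) * cwt θ p a (r+ρ) s η m qG.1 qG.2) *
                dpow r ρ qG.1 qG.2)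
            = (((‖F qF.1 qF.2‖ * ((qF.2 j : ℕ) : ℝ) * cwt θ p a (r+ρ) s η j qF.1 qF.2) *
                dpow r ρ qF.1 qF.2) * ((qF.1 m : ℕ) : ℝ)) *
              ((‖G qG.1 qG.2‖ * ((qG.2 m : ℕ) : ℝ) * cwt θ p a (r+ρ) s η m qG.1 qG.2) *
                dpow r ρ qG.1 qG.2) from by ring]
        rw [ENNReal.ofReal_mul (by
          have := (cwt_pos (θ := θ) (p := p) (a := a) (s := s) (η := η) hr' j qF.1 qF.2).le
          have := dpow_nonneg (r := r) (ρ := ρ) hr hρ qF.1 qF.2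
          positivity)]
        rw [ENNReal.ofReal_mul (by
          have := (cwt_pos (θ := θ) (p := p) (a := a) (s := s) (η := η) hr' j qF.1 qF.2).le
          have := dpow_nonneg (r := r) (ρ := ρ) hr hρ qF.1 qF.2
          positivity)]
        rw [ENNReal.ofReal_natCast]
    _ ≤ ∑' (m : ℤ) (qF : MIdx × MIdx),
          (ENNReal.ofReal ((‖F qF.1 qF.2‖ * ((qF.2 j : ℕ) : ℝ) * cwt θ p a (r+ρ) s η j qF.1 qF.2) *
              dpow r ρ qF.1 qF.2) * ((qF.1 m : ℕ) : ℝ≥0∞) * NG) := by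
        apply ENNReal.tsum_le_tsum; intro m
        apply ENNReal.tsum_le_tsum; intro qF
        exact mul_le_mul_right (inner_sum_le_hnorm_snd hr hρ hG m) _
    _ = (∑' (qF : MIdx × MIdx) (m : ℤ),
          ENNReal.ofReal ((‖F qF.1 qF.2‖ * ((qF.2 j : ℕ) : ℝ) * cwt θ p a (r+ρ) s η j qF.1 qF.2) *
              dpow r ρ qF.1 qF.2) * ((qF.1 m : ℕ) : ℝ≥0∞)) * NG := by
        have e1 : ∀ m : ℤ, ∑' qF : MIdx × MIdx,
            (ENNReal.ofReal ((‖F qF.1 qF.2‖ * ((qF.2 j : ℕ) : ℝ) * cwt θ p a (r+ρ) s η j qF.1 qF.2) *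
              dpow r ρ qF.1 qF.2) * ((qF.1 m : ℕ) : ℝ≥0∞) * NG)
            = (∑' qF : MIdx × MIdx,
              ENNReal.ofReal ((‖F qF.1 qF.2‖ * ((qF.2 j : ℕ) : ℝ) * cwt θ p a (r+ρ) s η j qF.1 qF.2) *
                dpow r ρ qF.1 qF.2) * ((qF.1 m : ℕ) : ℝ≥0∞)) * NG :=
          fun m => ENNReal.tsum_mul_right
        rw [tsum_congr e1, ENNReal.tsum_mul_right]
        congr 1
        exact ENNReal.tsum_comm
    _ = (∑' qF : MIdx × MIdx,
          (deg qF.1 : ℝ≥0∞) *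
            ENNReal.ofReal ((‖F qF.1 qF.2‖ * ((qF.2 j : ℕ) : ℝ) * cwt θ p a (r+ρ) s η j qF.1 qF.2) *
              dpow r ρ qF.1 qF.2)) * NG := by
        congr 1
        apply tsum_congr; intro qF
        rw [ENNReal.tsum_mul_left, tsum_nat_apply, mul_comm]
    _ ≤ (∑' qF : MIdx × MIdx,
          ENNReal.ofReal ((r+ρ)/ρ) *
            ENNReal.ofReal (‖F qF.1 qF.2‖ * ((qF.2 j : ℕ) : ℝ) * cwt θ p a (r+ρ) s η j qF.1 qF.2)) *
            NG := by
        apply mul_le_mul_left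
        apply ENNReal.tsum_le_tsum; intro qF
        exact term_deg_dpow hr hρ hF j qF (Or.inl rfl)
    _ ≤ ENNReal.ofReal ((r+ρ)/ρ) * NF * NG := by
        apply mul_le_mul_left
        rw [ENNReal.tsum_mul_left]
        apply mul_le_mul_right
        exact le_iSup (fun i : ℤ => ∑' q : MIdx × MIdx,
          ENNReal.ofReal (‖F q.1 q.2‖ * ((q.2 i : ℕ) : ℝ) * cwt θ p a (r+ρ) s η i q.1 q.2)) j
lemma sv3_bound {θ p a r ρ s η : ℝ} (hr : 0 < r) (hρ : 0 < ρ)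
    {F G : MIdx → MIdx → ℂ} (hF : IsHam F) (hG : IsHam G) (j : ℤ) :
    ∑' t : ℤ × (MIdx × MIdx) × (MIdx × MIdx), ENNReal.ofReal (sv3 θ p a r ρ s η F G j t) ≤
      ENNReal.ofReal ((r+ρ)/ρ) * hnorm θ p a (r+ρ) s η F * hnorm θ p a (r+ρ) s η G := by
  have hr' : (0:ℝ) < r + ρ := by linarith
  set NG := hnorm θ p a (r+ρ) s η G with hNG
  set NF := hnorm θ p a (r+ρ) s η F with hNF
  calc ∑' t : ℤ × (MIdx × MIdx) × (MIdx × MIdx), ENNReal.ofReal (sv3 θ p a r ρ s η F G j t)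
      = ∑' (m : ℤ) (qq : (MIdx × MIdx) × (MIdx × MIdx)),
          ENNReal.ofReal (sv3 θ p a r ρ s η F G j (m, qq)) :=
        ENNReal.tsum_prod
        (f := fun m qq => ENNReal.ofReal (sv3 θ p a r ρ s η F G j (m, qq)))
    _ = ∑' (m : ℤ) (qF : MIdx × MIdx) (qG : MIdx × MIdx),
          ENNReal.ofReal (sv3 θ p a r ρ s η F G j (m, (qF, qG))) :=
        tsum_congr fun m => ENNReal.tsum_prod
          (f := fun qF qG => ENNReal.ofReal (sv3 θ p a r ρ s η F G j (m, (qF, qG))))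
    _ = ∑' (m : ℤ) (qF : MIdx × MIdx),
          (ENNReal.ofReal ((‖F qF.1 qF.2‖ * ((qF.2 j : ℕ) : ℝ) * cwt θ p a (r+ρ) s η j qF.1 qF.2) *
              dpow r ρ qF.1 qF.2) * ((qF.2 m : ℕ) : ℝ≥0∞) *
            ∑' qG : MIdx × MIdx,
              ENNReal.ofReal ((‖G qG.1 qG.2‖ * ((qG.1 m : ℕ) : ℝ) * cwt θ p a (r+ρ) s η m qG.1 qG.2) *
                dpow r ρ qG.1 qG.2)) := by
        apply tsum_congr; intro m; apply tsum_congr; intro qF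
        rw [← ENNReal.tsum_mul_left]
        apply tsum_congr; intro qG
        unfold sv3
        simp only
        rw [show (‖F qF.1 qF.2‖ * ((qF.2 j : ℕ) : ℝ) * cwt θ p a (r+ρ) s η j qF.1 qF.2) *
              (((qF.2 m : ℕ) : ℝ) * dpow r ρ qF.1 qF.2) *
              ((‖G qG.1 qG.2‖ * ((qG.1 m : ℕ) : ℝ) * cwt θ p a (r+ρ) s η m qG.1 qG.2) *
                dpow r ρ qG.1 qG.2)
            = (((‖F qF.1 qF.2‖ * ((qF.2 j : ℕ) : ℝ) * cwt θ p a (r+ρ) s η j qF.1 qF.2) *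
                dpow r ρ qF.1 qF.2) * ((qF.2 m : ℕ) : ℝ)) *
              ((‖G qG.1 qG.2‖ * ((qG.1 m : ℕ) : ℝ) * cwt θ p a (r+ρ) s η m qG.1 qG.2) *
                dpow r ρ qG.1 qG.2) from by ring]
        rw [ENNReal.ofReal_mul (by
          have := (cwt_pos (θ := θ) (p := p) (a := a) (s := s) (η := η) hr' j qF.1 qF.2).le
          have := dpow_nonneg (r := r) (ρ := ρ) hr hρ qF.1 qF.2
          positivity)]
        rw [ENNReal.ofReal_mul (by
          have := (cwt_pos (θ := θ) (p := p) (a := a) (s := s) (η := η) hr' j qF.1 qF.2).le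
          have := dpow_nonneg (r := r) (ρ := ρ) hr hρ qF.1 qF.2
          positivity)]
        rw [ENNReal.ofReal_natCast]
    _ ≤ ∑' (m : ℤ) (qF : MIdx × MIdx),
          (ENNReal.ofReal ((‖F qF.1 qF.2‖ * ((qF.2 j : ℕ) : ℝ) * cwt θ p a (r+ρ) s η j qF.1 qF.2) *
              dpow r ρ qF.1 qF.2) * ((qF.2 m : ℕ) : ℝ≥0∞) * NG) := by
        apply ENNReal.tsum_le_tsum; intro m
        apply ENNReal.tsum_le_tsum; intro qF
        exact mul_le_mul_right (inner_sum_le_hnorm_fst hr hρ hG m) _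
    _ = (∑' (qF : MIdx × MIdx) (m : ℤ),
          ENNReal.ofReal ((‖F qF.1 qF.2‖ * ((qF.2 j : ℕ) : ℝ) * cwt θ p a (r+ρ) s η j qF.1 qF.2) *
              dpow r ρ qF.1 qF.2) * ((qF.2 m : ℕ) : ℝ≥0∞)) * NG := by
        have e1 : ∀ m : ℤ, ∑' qF : MIdx × MIdx,
            (ENNReal.ofReal ((‖F qF.1 qF.2‖ * ((qF.2 j : ℕ) : ℝ) * cwt θ p a (r+ρ) s η j qF.1 qF.2) *
              dpow r ρ qF.1 qF.2) * ((qF.2 m : ℕ) : ℝ≥0∞) * NG)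
            = (∑' qF : MIdx × MIdx,
              ENNReal.ofReal ((‖F qF.1 qF.2‖ * ((qF.2 j : ℕ) : ℝ) * cwt θ p a (r+ρ) s η j qF.1 qF.2) *
                dpow r ρ qF.1 qF.2) * ((qF.2 m : ℕ) : ℝ≥0∞)) * NG :=
          fun m => ENNReal.tsum_mul_right
        rw [tsum_congr e1, ENNReal.tsum_mul_right]
        congr 1
        exact ENNReal.tsum_comm
    _ = (∑' qF : MIdx × MIdx,
          (deg qF.2 : ℝ≥0∞) *
            ENNReal.ofReal ((‖F qF.1 qF.2‖ * ((qF.2 j : ℕ) : ℝ) * cwt θ p a (r+ρ) s η j qF.1 qF.2) *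
              dpow r ρ qF.1 qF.2)) * NG := by
        congr 1
        apply tsum_congr; intro qF
        rw [ENNReal.tsum_mul_left, tsum_nat_apply, mul_comm]
    _ ≤ (∑' qF : MIdx × MIdx,
          ENNReal.ofReal ((r+ρ)/ρ) *
            ENNReal.ofReal (‖F qF.1 qF.2‖ * ((qF.2 j : ℕ) : ℝ) * cwt θ p a (r+ρ) s η j qF.1 qF.2)) *
            NG := by
        apply mul_le_mul_left
        apply ENNReal.tsum_le_tsum; intro qF
        exact term_deg_dpow hr hρ hF j qF (Or.inr rfl)
    _ ≤ ENNReal.ofReal ((r+ρ)/ρ) * NF * NG := by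
        apply mul_le_mul_left
        rw [ENNReal.tsum_mul_left]
        apply mul_le_mul_right
        exact le_iSup (fun i : ℤ => ∑' q : MIdx × MIdx,
          ENNReal.ofReal (‖F q.1 q.2‖ * ((q.2 i : ℕ) : ℝ) * cwt θ p a (r+ρ) s η i q.1 q.2)) j
lemma sv2_bound {θ p a r ρ s η : ℝ} (hr : 0 < r) (hρ : 0 < ρ)
    {F G : MIdx → MIdx → ℂ} (hF : IsHam F) (hG : IsHam G) (j : ℤ) :
    ∑' t : ℤ × (MIdx × MIdx) × (MIdx × MIdx), ENNReal.ofReal (sv2 θ p a r ρ s η F G j t) ≤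
      ENNReal.ofReal ((r+ρ)/ρ) * hnorm θ p a (r+ρ) s η F * hnorm θ p a (r+ρ) s η G := by
  have hr' : (0:ℝ) < r + ρ := by linarith
  set NG := hnorm θ p a (r+ρ) s η G with hNG
  set NF := hnorm θ p a (r+ρ) s η F with hNF
  calc ∑' t : ℤ × (MIdx × MIdx) × (MIdx × MIdx), ENNReal.ofReal (sv2 θ p a r ρ s η F G j t)
      = ∑' (m : ℤ) (qq : (MIdx × MIdx) × (MIdx × MIdx)),
          ENNReal.ofReal (sv2 θ p a r ρ s η F G j (m, qq)) :=
        ENNReal.tsum_prod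
        (f := fun m qq => ENNReal.ofReal (sv2 θ p a r ρ s η F G j (m, qq)))
    _ = ∑' (m : ℤ) (qF : MIdx × MIdx) (qG : MIdx × MIdx),
          ENNReal.ofReal (sv2 θ p a r ρ s η F G j (m, (qF, qG))) :=
        tsum_congr fun m => ENNReal.tsum_prod
          (f := fun qF qG => ENNReal.ofReal (sv2 θ p a r ρ s η F G j (m, (qF, qG))))
    _ = ∑' (m : ℤ) (qG : MIdx × MIdx) (qF : MIdx × MIdx),
          ENNReal.ofReal (sv2 θ p a r ρ s η F G j (m, (qF, qG))) :=
        tsum_congr fun m => ENNReal.tsum_comm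
    _ = ∑' (m : ℤ) (qG : MIdx × MIdx),
          (ENNReal.ofReal ((‖G qG.1 qG.2‖ * ((qG.2 j : ℕ) : ℝ) * cwt θ p a (r+ρ) s η j qG.1 qG.2) *
              dpow r ρ qG.1 qG.2) * ((qG.2 m : ℕ) : ℝ≥0∞) *
            ∑' qF : MIdx × MIdx,
              ENNReal.ofReal ((‖F qF.1 qF.2‖ * ((qF.1 m : ℕ) : ℝ) * cwt θ p a (r+ρ) s η m qF.1 qF.2) *
                dpow r ρ qF.1 qF.2)) := by
        apply tsum_congr; intro m; apply tsum_congr; intro qG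
        rw [← ENNReal.tsum_mul_left]
        apply tsum_congr; intro qF
        unfold sv2
        simp only
        rw [show (‖F qF.1 qF.2‖ * ((qF.1 m : ℕ) : ℝ) * cwt θ p a (r+ρ) s η m qF.1 qF.2) *
              dpow r ρ qF.1 qF.2 *
              ((‖G qG.1 qG.2‖ * ((qG.2 j : ℕ) : ℝ) * cwt θ p a (r+ρ) s η j qG.1 qG.2) *
                (((qG.2 m : ℕ) : ℝ) * dpow r ρ qG.1 qG.2))
            = (((‖G qG.1 qG.2‖ * ((qG.2 j : ℕ) : ℝ) * cwt θ p a (r+ρ) s η j qG.1 qG.2) *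
                dpow r ρ qG.1 qG.2) * ((qG.2 m : ℕ) : ℝ)) *
              ((‖F qF.1 qF.2‖ * ((qF.1 m : ℕ) : ℝ) * cwt θ p a (r+ρ) s η m qF.1 qF.2) *
                dpow r ρ qF.1 qF.2) from by ring]
        rw [ENNReal.ofReal_mul (by
          have := (cwt_pos (θ := θ) (p := p) (a := a) (s := s) (η := η) hr' j qG.1 qG.2).le
          have := dpow_nonneg (r := r) (ρ := ρ) hr hρ qG.1 qG.2
          positivity)]
        rw [ENNReal.ofReal_mul (by
          have := (cwt_pos (θ := θ) (p := p) (a := a) (s := s) (η := η) hr' j qG.1 qG.2).le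
          have := dpow_nonneg (r := r) (ρ := ρ) hr hρ qG.1 qG.2
          positivity)]
        rw [ENNReal.ofReal_natCast]
    _ ≤ ∑' (m : ℤ) (qG : MIdx × MIdx),
          (ENNReal.ofReal ((‖G qG.1 qG.2‖ * ((qG.2 j : ℕ) : ℝ) * cwt θ p a (r+ρ) s η j qG.1 qG.2) *
              dpow r ρ qG.1 qG.2) * ((qG.2 m : ℕ) : ℝ≥0∞) * NF) := by
        apply ENNReal.tsum_le_tsum; intro m
        apply ENNReal.tsum_le_tsum; intro qG
        exact mul_le_mul_right (inner_sum_le_hnorm_fst hr hρ hF m) _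
    _ = (∑' (qG : MIdx × MIdx) (m : ℤ),
          ENNReal.ofReal ((‖G qG.1 qG.2‖ * ((qG.2 j : ℕ) : ℝ) * cwt θ p a (r+ρ) s η j qG.1 qG.2) *
              dpow r ρ qG.1 qG.2) * ((qG.2 m : ℕ) : ℝ≥0∞)) * NF := by
        have e1 : ∀ m : ℤ, ∑' qG : MIdx × MIdx,
            (ENNReal.ofReal ((‖G qG.1 qG.2‖ * ((qG.2 j : ℕ) : ℝ) * cwt θ p a (r+ρ) s η j qG.1 qG.2) *
              dpow r ρ qG.1 qG.2) * ((qG.2 m : ℕ) : ℝ≥0∞) * NF)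
            = (∑' qG : MIdx × MIdx,
              ENNReal.ofReal ((‖G qG.1 qG.2‖ * ((qG.2 j : ℕ) : ℝ) * cwt θ p a (r+ρ) s η j qG.1 qG.2) *
                dpow r ρ qG.1 qG.2) * ((qG.2 m : ℕ) : ℝ≥0∞)) * NF :=
          fun m => ENNReal.tsum_mul_right
        rw [tsum_congr e1, ENNReal.tsum_mul_right]
        congr 1
        exact ENNReal.tsum_comm
    _ = (∑' qG : MIdx × MIdx,
          (deg qG.2 : ℝ≥0∞) *
            ENNReal.ofReal ((‖G qG.1 qG.2‖ * ((qG.2 j : ℕ) : ℝ) * cwt θ p a (r+ρ) s η j qG.1 qG.2) *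
              dpow r ρ qG.1 qG.2)) * NF := by
        congr 1
        apply tsum_congr; intro qG
        rw [ENNReal.tsum_mul_left, tsum_nat_apply, mul_comm]
    _ ≤ (∑' qG : MIdx × MIdx,
          ENNReal.ofReal ((r+ρ)/ρ) *
            ENNReal.ofReal (‖G qG.1 qG.2‖ * ((qG.2 j : ℕ) : ℝ) * cwt θ p a (r+ρ) s η j qG.1 qG.2)) *
            NF := by
        apply mul_le_mul_left
        apply ENNReal.tsum_le_tsum; intro qG
        exact term_deg_dpow hr hρ hG j qG (Or.inr rfl)
    _ ≤ ENNReal.ofReal ((r+ρ)/ρ) * NG * NF := by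
        apply mul_le_mul_left
        rw [ENNReal.tsum_mul_left]
        apply mul_le_mul_right
        exact le_iSup (fun i : ℤ => ∑' q : MIdx × MIdx,
          ENNReal.ofReal (‖G q.1 q.2‖ * ((q.2 i : ℕ) : ℝ) * cwt θ p a (r+ρ) s η i q.1 q.2)) j
    _ = ENNReal.ofReal ((r+ρ)/ρ) * NF * NG := by ring

lemma sv4_bound {θ p a r ρ s η : ℝ} (hr : 0 < r) (hρ : 0 < ρ)
    {F G : MIdx → MIdx → ℂ} (hF : IsHam F) (hG : IsHam G) (j : ℤ) :
    ∑' t : ℤ × (MIdx × MIdx) × (MIdx × MIdx), ENNReal.ofReal (sv4 θ p a r ρ s η F G j t) ≤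
      ENNReal.ofReal ((r+ρ)/ρ) * hnorm θ p a (r+ρ) s η F * hnorm θ p a (r+ρ) s η G := by
  have hr' : (0:ℝ) < r + ρ := by linarith
  set NG := hnorm θ p a (r+ρ) s η G with hNG
  set NF := hnorm θ p a (r+ρ) s η F with hNF
  calc ∑' t : ℤ × (MIdx × MIdx) × (MIdx × MIdx), ENNReal.ofReal (sv4 θ p a r ρ s η F G j t)
      = ∑' (m : ℤ) (qq : (MIdx × MIdx) × (MIdx × MIdx)),
          ENNReal.ofReal (sv4 θ p a r ρ s η F G j (m, qq)) :=
        ENNReal.tsum_prod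
        (f := fun m qq => ENNReal.ofReal (sv4 θ p a r ρ s η F G j (m, qq)))
    _ = ∑' (m : ℤ) (qF : MIdx × MIdx) (qG : MIdx × MIdx),
          ENNReal.ofReal (sv4 θ p a r ρ s η F G j (m, (qF, qG))) :=
        tsum_congr fun m => ENNReal.tsum_prod
          (f := fun qF qG => ENNReal.ofReal (sv4 θ p a r ρ s η F G j (m, (qF, qG))))
    _ = ∑' (m : ℤ) (qG : MIdx × MIdx) (qF : MIdx × MIdx),
          ENNReal.ofReal (sv4 θ p a r ρ s η F G j (m, (qF, qG))) :=
        tsum_congr fun m => ENNReal.tsum_comm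
    _ = ∑' (m : ℤ) (qG : MIdx × MIdx),
          (ENNReal.ofReal ((‖G qG.1 qG.2‖ * ((qG.2 j : ℕ) : ℝ) * cwt θ p a (r+ρ) s η j qG.1 qG.2) *
              dpow r ρ qG.1 qG.2) * ((qG.1 m : ℕ) : ℝ≥0∞) *
            ∑' qF : MIdx × MIdx,
              ENNReal.ofReal ((‖F qF.1 qF.2‖ * ((qF.2 m : ℕ) : ℝ) * cwt θ p a (r+ρ) s η m qF.1 qF.2) *
                dpow r ρ qF.1 qF.2)) := by
        apply tsum_congr; intro m; apply tsum_congr; intro qG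
        rw [← ENNReal.tsum_mul_left]
        apply tsum_congr; intro qF
        unfold sv4
        simp only
        rw [show (‖F qF.1 qF.2‖ * ((qF.2 m : ℕ) : ℝ) * cwt θ p a (r+ρ) s η m qF.1 qF.2) *
              dpow r ρ qF.1 qF.2 *
              ((‖G qG.1 qG.2‖ * ((qG.2 j : ℕ) : ℝ) * cwt θ p a (r+ρ) s η j qG.1 qG.2) *
                (((qG.1 m : ℕ) : ℝ) * dpow r ρ qG.1 qG.2))
            = (((‖G qG.1 qG.2‖ * ((qG.2 j : ℕ) : ℝ) * cwt θ p a (r+ρ) s η j qG.1 qG.2) *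
                dpow r ρ qG.1 qG.2) * ((qG.1 m : ℕ) : ℝ)) *
              ((‖F qF.1 qF.2‖ * ((qF.2 m : ℕ) : ℝ) * cwt θ p a (r+ρ) s η m qF.1 qF.2) *
                dpow r ρ qF.1 qF.2) from by ring]
        rw [ENNReal.ofReal_mul (by
          have := (cwt_pos (θ := θ) (p := p) (a := a) (s := s) (η := η) hr' j qG.1 qG.2).le
          have := dpow_nonneg (r := r) (ρ := ρ) hr hρ qG.1 qG.2
          positivity)]
        rw [ENNReal.ofReal_mul (by
          have := (cwt_pos (θ := θ) (p := p) (a := a) (s := s) (η := η) hr' j qG.1 qG.2).le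
          have := dpow_nonneg (r := r) (ρ := ρ) hr hρ qG.1 qG.2
          positivity)]
        rw [ENNReal.ofReal_natCast]
    _ ≤ ∑' (m : ℤ) (qG : MIdx × MIdx),
          (ENNReal.ofReal ((‖G qG.1 qG.2‖ * ((qG.2 j : ℕ) : ℝ) * cwt θ p a (r+ρ) s η j qG.1 qG.2) *
              dpow r ρ qG.1 qG.2) * ((qG.1 m : ℕ) : ℝ≥0∞) * NF) := by
        apply ENNReal.tsum_le_tsum; intro m
        apply ENNReal.tsum_le_tsum; intro qG
        exact mul_le_mul_right (inner_sum_le_hnorm_snd hr hρ hF m) _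
    _ = (∑' (qG : MIdx × MIdx) (m : ℤ),
          ENNReal.ofReal ((‖G qG.1 qG.2‖ * ((qG.2 j : ℕ) : ℝ) * cwt θ p a (r+ρ) s η j qG.1 qG.2) *
              dpow r ρ qG.1 qG.2) * ((qG.1 m : ℕ) : ℝ≥0∞)) * NF := by
        have e1 : ∀ m : ℤ, ∑' qG : MIdx × MIdx,
            (ENNReal.ofReal ((‖G qG.1 qG.2‖ * ((qG.2 j : ℕ) : ℝ) * cwt θ p a (r+ρ) s η j qG.1 qG.2) *
              dpow r ρ qG.1 qG.2) * ((qG.1 m : ℕ) : ℝ≥0∞) * NF)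
            = (∑' qG : MIdx × MIdx,
              ENNReal.ofReal ((‖G qG.1 qG.2‖ * ((qG.2 j : ℕ) : ℝ) * cwt θ p a (r+ρ) s η j qG.1 qG.2) *
                dpow r ρ qG.1 qG.2) * ((qG.1 m : ℕ) : ℝ≥0∞)) * NF :=
          fun m => ENNReal.tsum_mul_right
        rw [tsum_congr e1, ENNReal.tsum_mul_right]
        congr 1
        exact ENNReal.tsum_comm
    _ = (∑' qG : MIdx × MIdx,
          (deg qG.1 : ℝ≥0∞) *
            ENNReal.ofReal ((‖G qG.1 qG.2‖ * ((qG.2 j : ℕ) : ℝ) * cwt θ p a (r+ρ) s η j qG.1 qG.2) *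
              dpow r ρ qG.1 qG.2)) * NF := by
        congr 1
        apply tsum_congr; intro qG
        rw [ENNReal.tsum_mul_left, tsum_nat_apply, mul_comm]
    _ ≤ (∑' qG : MIdx × MIdx,
          ENNReal.ofReal ((r+ρ)/ρ) *
            ENNReal.ofReal (‖G qG.1 qG.2‖ * ((qG.2 j : ℕ) : ℝ) * cwt θ p a (r+ρ) s η j qG.1 qG.2)) *
            NF := by
        apply mul_le_mul_left
        apply ENNReal.tsum_le_tsum; intro qG
        exact term_deg_dpow hr hρ hG j qG (Or.inl rfl)
    _ ≤ ENNReal.ofReal ((r+ρ)/ρ) * NG * NF := by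
        apply mul_le_mul_left
        rw [ENNReal.tsum_mul_left]
        apply mul_le_mul_right
        exact le_iSup (fun i : ℤ => ∑' q : MIdx × MIdx,
          ENNReal.ofReal (‖G q.1 q.2‖ * ((q.2 i : ℕ) : ℝ) * cwt θ p a (r+ρ) s η i q.1 q.2)) j
    _ = ENNReal.ofReal ((r+ρ)/ρ) * NF * NG := by ring
lemma const_real_le {r ρ : ℝ} (hr : 0 < r) (hρ : 0 < ρ) :
    4 * ((r+ρ)/ρ) ≤ 8 * max 1 (r/ρ) := by
  have hx : (r+ρ)/ρ = r/ρ + 1 := by field_simp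
  rcases le_total (r/ρ) 1 with h | h
  · rw [hx, max_eq_left h]; linarith
  · rw [hx, max_eq_right h]; linarith

lemma master_bound {θ p a r ρ s η : ℝ} (hr : 0 < r) (hρ : 0 < ρ) (hη : 0 ≤ η)
    {F G : MIdx → MIdx → ℂ} (hF : IsHam F) (hG : IsHam G) :
    (⨆ j : ℤ, ∑' t : ℤ × (MIdx × MIdx) × (MIdx × MIdx),
        ENNReal.ofReal (Vre θ p a r s η F G j t)) ≤
      ENNReal.ofReal (8 * max 1 (r / ρ)) * hnorm θ p a (r + ρ) s η F *
        hnorm θ p a (r + ρ) s η G := by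
  set NF := hnorm θ p a (r+ρ) s η F with hNF
  set NG := hnorm θ p a (r+ρ) s η G with hNG
  · apply iSup_le
    intro j
    have hpt : ∀ t : ℤ × (MIdx × MIdx) × (MIdx × MIdx),
        ENNReal.ofReal (Vre θ p a r s η F G j t) ≤
          ENNReal.ofReal (sv1 θ p a r ρ s η F G j t) +
          ENNReal.ofReal (sv2 θ p a r ρ s η F G j t) +
          ENNReal.ofReal (sv3 θ p a r ρ s η F G j t) +
          ENNReal.ofReal (sv4 θ p a r ρ s η F G j t) := by
      intro t
      calc ENNReal.ofReal (Vre θ p a r s η F G j t)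
          ≤ ENNReal.ofReal (sv1 θ p a r ρ s η F G j t + sv2 θ p a r ρ s η F G j t +
              sv3 θ p a r ρ s η F G j t + sv4 θ p a r ρ s η F G j t) :=
            ENNReal.ofReal_le_ofReal (Vre_le_sv hr hρ hη hF hG j t)
        _ ≤ ENNReal.ofReal (sv1 θ p a r ρ s η F G j t + sv2 θ p a r ρ s η F G j t +
              sv3 θ p a r ρ s η F G j t) + ENNReal.ofReal (sv4 θ p a r ρ s η F G j t) :=
            ENNReal.ofReal_add_le
        _ ≤ ENNReal.ofReal (sv1 θ p a r ρ s η F G j t + sv2 θ p a r ρ s η F G j t) +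
            ENNReal.ofReal (sv3 θ p a r ρ s η F G j t) +
            ENNReal.ofReal (sv4 θ p a r ρ s η F G j t) :=
            add_le_add_left ENNReal.ofReal_add_le _
        _ ≤ ENNReal.ofReal (sv1 θ p a r ρ s η F G j t) +
            ENNReal.ofReal (sv2 θ p a r ρ s η F G j t) +
            ENNReal.ofReal (sv3 θ p a r ρ s η F G j t) +
            ENNReal.ofReal (sv4 θ p a r ρ s η F G j t) := by
            apply add_le_add_left
            apply add_le_add_left
            exact ENNReal.ofReal_add_le
    calc ∑' t : ℤ × (MIdx × MIdx) × (MIdx × MIdx),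
          ENNReal.ofReal (Vre θ p a r s η F G j t)
        ≤ ∑' t : ℤ × (MIdx × MIdx) × (MIdx × MIdx),
          (ENNReal.ofReal (sv1 θ p a r ρ s η F G j t) +
            ENNReal.ofReal (sv2 θ p a r ρ s η F G j t) +
            ENNReal.ofReal (sv3 θ p a r ρ s η F G j t) +
            ENNReal.ofReal (sv4 θ p a r ρ s η F G j t)) := ENNReal.tsum_le_tsum hpt
      _ = (∑' t : ℤ × (MIdx × MIdx) × (MIdx × MIdx), ENNReal.ofReal (sv1 θ p a r ρ s η F G j t)) +
          (∑' t : ℤ × (MIdx × MIdx) × (MIdx × MIdx), ENNReal.ofReal (sv2 θ p a r ρ s η F G j t)) +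
          (∑' t : ℤ × (MIdx × MIdx) × (MIdx × MIdx), ENNReal.ofReal (sv3 θ p a r ρ s η F G j t)) +
          (∑' t : ℤ × (MIdx × MIdx) × (MIdx × MIdx), ENNReal.ofReal (sv4 θ p a r ρ s η F G j t)) := by
          rw [ENNReal.tsum_add, ENNReal.tsum_add, ENNReal.tsum_add]
      _ ≤ ENNReal.ofReal ((r+ρ)/ρ) * NF * NG + ENNReal.ofReal ((r+ρ)/ρ) * NF * NG +
          ENNReal.ofReal ((r+ρ)/ρ) * NF * NG + ENNReal.ofReal ((r+ρ)/ρ) * NF * NG := by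
          apply add_le_add
          apply add_le_add
          apply add_le_add
          · exact sv1_bound hr hρ hF hG j
          · exact sv2_bound hr hρ hF hG j
          · exact sv3_bound hr hρ hF hG j
          · exact sv4_bound hr hρ hF hG j
      _ = ENNReal.ofReal (4 * ((r+ρ)/ρ)) * NF * NG := by
          rw [ENNReal.ofReal_mul (by norm_num : (0:ℝ) ≤ 4)]
          rw [show (ENNReal.ofReal 4 : ℝ≥0∞) = 4 by
            norm_num]
          ring
      _ ≤ ENNReal.ofReal (8 * max 1 (r / ρ)) * NF * NG := by
          apply mul_le_mul_left
          apply mul_le_mul_left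
          exact ENNReal.ofReal_le_ofReal (const_real_le hr hρ)

lemma key_est {θ p a r ρ s η : ℝ} (hr : 0 < r) (hρ : 0 < ρ) (hη : 0 ≤ η)
    {F G : MIdx → MIdx → ℂ} (hF : IsHam F) (hG : IsHam G) :
    hnorm θ p a r s η (pois F G) ≤
      ENNReal.ofReal (8 * max 1 (r / ρ)) * hnorm θ p a (r + ρ) s η F *
        hnorm θ p a (r + ρ) s η G :=
  (hnorm_pois_le_master hr F G).trans (master_bound hr hρ hη hF hG)
/-- The summand of the Poisson bracket coefficient. -/
def poisFn (F G : MIdx → MIdx → ℂ) (A B : MIdx) (t : ℤ × (MIdx × MIdx) × (MIdx × MIdx)) : ℂ :=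
  if t.2.1.1 + t.2.2.1 = A + Finsupp.single t.1 1 ∧
      t.2.1.2 + t.2.2.2 = B + Finsupp.single t.1 1 then
    Complex.I *
      ((t.2.1.1 t.1 : ℂ) * (t.2.2.2 t.1 : ℂ) - (t.2.1.2 t.1 : ℂ) * (t.2.2.1 t.1 : ℂ)) *
      F t.2.1.1 t.2.1.2 * G t.2.2.1 t.2.2.2
  else 0

lemma pois_eq (F G : MIdx → MIdx → ℂ) (A B : MIdx) :
    pois F G A B = ∑' t, poisFn F G A B t := rfl

lemma isHam_sub {F F' : MIdx → MIdx → ℂ} (h : IsHam F) (h' : IsHam F') :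
    IsHam (fun α β => F α β - F' α β) := by
  constructor
  · intro α β hd
    simp only
    rw [h.1 α β hd, h'.1 α β hd, sub_zero]
  · intro α β
    simp only
    rw [h.2 α β, h'.2 α β, map_sub]

lemma hnorm_tri {θ p a r s η : ℝ} (hr : 0 < r) (X Y Z : MIdx → MIdx → ℂ)
    (h : ∀ α β, ‖Z α β‖ ≤ ‖X α β‖ + ‖Y α β‖) :
    hnorm θ p a r s η Z ≤ hnorm θ p a r s η X + hnorm θ p a r s η Y := by
  apply iSup_le
  intro j
  have hpt : ∀ q : MIdx × MIdx,
      ENNReal.ofReal (‖Z q.1 q.2‖ * ((q.2 j : ℕ) : ℝ) * cwt θ p a r s η j q.1 q.2) ≤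
        ENNReal.ofReal (‖X q.1 q.2‖ * ((q.2 j : ℕ) : ℝ) * cwt θ p a r s η j q.1 q.2) +
        ENNReal.ofReal (‖Y q.1 q.2‖ * ((q.2 j : ℕ) : ℝ) * cwt θ p a r s η j q.1 q.2) := by
    intro q
    rw [← ENNReal.ofReal_add (by
        have := (cwt_pos (θ := θ) (p := p) (a := a) (s := s) (η := η) hr j q.1 q.2).le
        positivity)
      (by
        have := (cwt_pos (θ := θ) (p := p) (a := a) (s := s) (η := η) hr j q.1 q.2).le
        positivity)]
    apply ENNReal.ofReal_le_ofReal
    have hc : (0:ℝ) ≤ ((q.2 j : ℕ) : ℝ) * cwt θ p a r s η j q.1 q.2 := by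
      have := (cwt_pos (θ := θ) (p := p) (a := a) (s := s) (η := η) hr j q.1 q.2).le
      positivity
    calc ‖Z q.1 q.2‖ * ((q.2 j : ℕ) : ℝ) * cwt θ p a r s η j q.1 q.2
        = ‖Z q.1 q.2‖ * (((q.2 j : ℕ) : ℝ) * cwt θ p a r s η j q.1 q.2) := by ring
      _ ≤ (‖X q.1 q.2‖ + ‖Y q.1 q.2‖) * (((q.2 j : ℕ) : ℝ) * cwt θ p a r s η j q.1 q.2) :=
          mul_le_mul_of_nonneg_right (h q.1 q.2) hc
      _ = ‖X q.1 q.2‖ * ((q.2 j : ℕ) : ℝ) * cwt θ p a r s η j q.1 q.2 +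
          ‖Y q.1 q.2‖ * ((q.2 j : ℕ) : ℝ) * cwt θ p a r s η j q.1 q.2 := by ring
  calc ∑' q : MIdx × MIdx,
      ENNReal.ofReal (‖Z q.1 q.2‖ * ((q.2 j : ℕ) : ℝ) * cwt θ p a r s η j q.1 q.2)
      ≤ ∑' q : MIdx × MIdx,
        (ENNReal.ofReal (‖X q.1 q.2‖ * ((q.2 j : ℕ) : ℝ) * cwt θ p a r s η j q.1 q.2) +
         ENNReal.ofReal (‖Y q.1 q.2‖ * ((q.2 j : ℕ) : ℝ) * cwt θ p a r s η j q.1 q.2)) :=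
        ENNReal.tsum_le_tsum hpt
    _ = (∑' q : MIdx × MIdx,
          ENNReal.ofReal (‖X q.1 q.2‖ * ((q.2 j : ℕ) : ℝ) * cwt θ p a r s η j q.1 q.2)) +
        (∑' q : MIdx × MIdx,
          ENNReal.ofReal (‖Y q.1 q.2‖ * ((q.2 j : ℕ) : ℝ) * cwt θ p a r s η j q.1 q.2)) :=
        ENNReal.tsum_add
    _ ≤ hnorm θ p a r s η X + hnorm θ p a r s η Y := by
        apply add_le_add
        · exact le_iSup (fun i : ℤ => ∑' q : MIdx × MIdx,
            ENNReal.ofReal (‖X q.1 q.2‖ * ((q.2 i : ℕ) : ℝ) * cwt θ p a r s η i q.1 q.2)) j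
        · exact le_iSup (fun i : ℤ => ∑' q : MIdx × MIdx,
            ENNReal.ofReal (‖Y q.1 q.2‖ * ((q.2 i : ℕ) : ℝ) * cwt θ p a r s η i q.1 q.2)) j

lemma deg_eq_zero_iff {B : MIdx} : deg B = 0 ↔ B = 0 := by
  constructor
  · intro h
    ext i
    by_contra hi
    have hm : i ∈ B.support := Finsupp.mem_support_iff.2 (by simpa using hi)
    have := deg_pos_of_apply (α := B) (m := i) (Nat.one_le_iff_ne_zero.2 (by simpa using hi))
    omega
  · intro h; rw [h]; unfold deg; simp

/-- pointwise comparison of a fixed-coefficient term with the master majorant. -/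
lemma pois_term_pointwise {θ p a r s η : ℝ} (hr : 0 < r) (F G : MIdx → MIdx → ℂ)
    (j : ℤ) (A B : MIdx) (t : ℤ × (MIdx × MIdx) × (MIdx × MIdx)) :
    ENNReal.ofReal ‖poisFn F G A B t‖ *
        ENNReal.ofReal (((B j : ℕ) : ℝ) * cwt θ p a r s η j A B) ≤
      ENNReal.ofReal (Vre θ p a r s η F G j t) := by
  obtain ⟨m, ⟨⟨α, β⟩, ⟨α', β'⟩⟩⟩ := t
  unfold poisFn
  simp only
  by_cases hc : α + α' = A + Finsupp.single m 1 ∧ β + β' = B + Finsupp.single m 1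
  · have hq1 : A = α + α' - Finsupp.single m 1 := by rw [hc.1, add_tsub_cancel_right]
    have hq2 : B = β + β' - Finsupp.single m 1 := by rw [hc.2, add_tsub_cancel_right]
    rw [if_pos hc, hq1, hq2]
    rw [← ENNReal.ofReal_mul (norm_nonneg _)]
    apply ENNReal.ofReal_le_ofReal
    unfold Vre
    simp only
    have hnn : (0:ℝ) ≤ (((β + β' - Finsupp.single m 1 : MIdx) j : ℕ) : ℝ) *
        cwt θ p a r s η j (α + α' - Finsupp.single m 1) (β + β' - Finsupp.single m 1) :=
      mul_nonneg (Nat.cast_nonneg _) (cwt_pos hr j _ _).le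
    calc ‖Complex.I * ((α m : ℂ) * (β' m : ℂ) - (β m : ℂ) * (α' m : ℂ)) * F α β * G α' β'‖ *
          ((((β + β' - Finsupp.single m 1 : MIdx) j : ℕ) : ℝ) *
            cwt θ p a r s η j (α + α' - Finsupp.single m 1) (β + β' - Finsupp.single m 1))
        ≤ ((α m * β' m + β m * α' m : ℕ) : ℝ) * (‖F α β‖ * ‖G α' β'‖) *
          ((((β + β' - Finsupp.single m 1 : MIdx) j : ℕ) : ℝ) *
            cwt θ p a r s η j (α + α' - Finsupp.single m 1) (β + β' - Finsupp.single m 1)) :=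
          mul_le_mul_of_nonneg_right (coef_norm_le _ _ _ _ _ _) hnn
      _ = ((α m * β' m + β m * α' m : ℕ) : ℝ) * (‖F α β‖ * ‖G α' β'‖) *
          (((β + β' - Finsupp.single m 1 : MIdx) j : ℕ) : ℝ) *
            cwt θ p a r s η j (α + α' - Finsupp.single m 1) (β + β' - Finsupp.single m 1) := by
          ring
  · rw [if_neg hc]
    simp
lemma poisFn_zero_of_degB {F G : MIdx → MIdx → ℂ} (hF : IsHam F) (hG : IsHam G)
    (A : MIdx) (t : ℤ × (MIdx × MIdx) × (MIdx × MIdx)) :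
    poisFn F G A 0 t = 0 := by
  obtain ⟨m, ⟨⟨α, β⟩, ⟨α', β'⟩⟩⟩ := t
  unfold poisFn
  simp only
  by_cases hc : α + α' = A + Finsupp.single m 1 ∧ β + β' = 0 + Finsupp.single m 1
  · rw [if_pos hc]
    have hc2 : β + β' = Finsupp.single m 1 := by rw [hc.2, zero_add]
    have happ : ∀ i : ℤ, β i + β' i = (Finsupp.single m 1 : MIdx) i := by
      intro i
      have := congrArg (fun f : MIdx => f i) hc2
      simpa [Finsupp.add_apply] using this
    have hm : β m + β' m = 1 := by
      have := happ m
      rwa [Finsupp.single_apply, if_pos rfl] at this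
    have hoff : ∀ i : ℤ, i ≠ m → β i = 0 ∧ β' i = 0 := by
      intro i hi
      have := happ i
      rw [Finsupp.single_apply, if_neg (fun hh => hi hh.symm)] at this
      omega
    rcases Nat.eq_zero_or_pos (β m) with hβm | hβm
    · -- β = 0
      have hβ : β = 0 := by
        ext i
        by_cases hi : i = m
        · rw [hi]; simpa using hβm
        · simpa using (hoff i hi).1
      by_cases hF0 : F α β = 0
      · rw [hF0]; ring
      · have hdα : deg α = deg β := deg_eq_of_isHam hF hF0
        have hα : α = 0 := by
          apply deg_eq_zero_iff.1
          rw [hdα, hβ]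
          exact deg_eq_zero_iff.2 rfl
        have hαm : α m = 0 := by rw [hα]; rfl
        rw [hαm, hβm]
        push_cast
        ring
    · -- β' = 0
      have hβ'm : β' m = 0 := by omega
      have hβ' : β' = 0 := by
        ext i
        by_cases hi : i = m
        · rw [hi]; simpa using hβ'm
        · simpa using (hoff i hi).2
      by_cases hG0 : G α' β' = 0
      · rw [hG0]; ring
      · have hdα : deg α' = deg β' := deg_eq_of_isHam hG hG0
        have hα' : α' = 0 := by
          apply deg_eq_zero_iff.1
          rw [hdα, hβ']
          exact deg_eq_zero_iff.2 rfl
        have hα'm : α' m = 0 := by rw [hα']; rfl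
        rw [hα'm, hβ'm]
        push_cast
        ring
  · rw [if_neg hc]

lemma pois_summable {θ p a r ρ s η : ℝ} (hr : 0 < r) (hρ : 0 < ρ) (hη : 0 ≤ η)
    {F G : MIdx → MIdx → ℂ} (hF : IsHam F) (hG : IsHam G)
    (hFfin : hnorm θ p a (r+ρ) s η F ≠ ⊤) (hGfin : hnorm θ p a (r+ρ) s η G ≠ ⊤)
    (A B : MIdx) : Summable (poisFn F G A B) := by
  by_cases hB : deg B = 0
  · have hB0 : B = 0 := deg_eq_zero_iff.1 hB
    subst hB0
    have hzero : poisFn F G A 0 = fun _ => 0 := funext (poisFn_zero_of_degB hF hG A)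
    rw [hzero]
    exact summable_zero
  · obtain ⟨j, hj⟩ : ∃ j, B j ≠ 0 := by
      by_contra h
      push_neg at h
      exact hB (deg_eq_zero_iff.2 (Finsupp.ext h))
    have hRne : ENNReal.ofReal (8 * max 1 (r / ρ)) * hnorm θ p a (r+ρ) s η F *
        hnorm θ p a (r+ρ) s η G ≠ ⊤ :=
      ENNReal.mul_ne_top (ENNReal.mul_ne_top ENNReal.ofReal_ne_top hFfin) hGfin
    have hMfin : ∑' t : ℤ × (MIdx × MIdx) × (MIdx × MIdx),
        ENNReal.ofReal (Vre θ p a r s η F G j t) ≠ ⊤ := by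
      have h1 : ∑' t : ℤ × (MIdx × MIdx) × (MIdx × MIdx),
          ENNReal.ofReal (Vre θ p a r s η F G j t) ≤
          ⨆ i : ℤ, ∑' t : ℤ × (MIdx × MIdx) × (MIdx × MIdx),
            ENNReal.ofReal (Vre θ p a r s η F G i t) :=
        le_iSup (fun i : ℤ => ∑' t : ℤ × (MIdx × MIdx) × (MIdx × MIdx),
          ENNReal.ofReal (Vre θ p a r s η F G i t)) j
      exact ne_top_of_le_ne_top hRne (h1.trans (master_bound hr hρ hη hF hG))
    have hcpos : (0:ℝ) < ((B j : ℕ) : ℝ) * cwt θ p a r s η j A B := by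
      apply mul_pos _ (cwt_pos hr j A B)
      exact_mod_cast Nat.pos_of_ne_zero hj
    have hc0 : ENNReal.ofReal (((B j : ℕ) : ℝ) * cwt θ p a r s η j A B) ≠ 0 :=
      (ENNReal.ofReal_pos.2 hcpos).ne'
    have hsum : (∑' t, ENNReal.ofReal ‖poisFn F G A B t‖) *
        ENNReal.ofReal (((B j : ℕ) : ℝ) * cwt θ p a r s η j A B) ≤
        ∑' t : ℤ × (MIdx × MIdx) × (MIdx × MIdx), ENNReal.ofReal (Vre θ p a r s η F G j t) := by
      rw [← ENNReal.tsum_mul_right]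
      exact ENNReal.tsum_le_tsum (pois_term_pointwise hr F G j A B)
    have hfin : ∑' t, ENNReal.ofReal ‖poisFn F G A B t‖ ≠ ⊤ := by
      intro htop
      rw [htop, ENNReal.top_mul hc0] at hsum
      exact hMfin (top_le_iff.1 hsum)
    have hfin2 : ∑' t, ((‖poisFn F G A B t‖₊ : ℝ≥0∞)) ≠ ⊤ := by
      simpa only [← enorm_eq_nnnorm, ← ofReal_norm] using hfin
    have h2 := ENNReal.tsum_coe_ne_top_iff_summable.1 hfin2
    have h3 : Summable fun t => ‖poisFn F G A B t‖ := by
      have := NNReal.summable_coe.2 h2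
      simpa [coe_nnnorm] using this
    exact h3.of_norm

lemma pois_sub {F G F' G' : MIdx → MIdx → ℂ} (A B : MIdx)
    (h1 : Summable (poisFn F G A B)) (h2 : Summable (poisFn F' G' A B))
    (h3 : Summable (poisFn (fun α β => F α β - F' α β) G A B))
    (h4 : Summable (poisFn F' (fun α β => G α β - G' α β) A B)) :
    pois F G A B - pois F' G' A B =
      pois (fun α β => F α β - F' α β) G A B +
        pois F' (fun α β => G α β - G' α β) A B := by
  rw [pois_eq, pois_eq, pois_eq, pois_eq, ← Summable.tsum_sub h1 h2, ← Summable.tsum_add h3 h4]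
  apply tsum_congr
  intro t
  unfold poisFn
  by_cases hc : t.2.1.1 + t.2.2.1 = A + Finsupp.single t.1 1 ∧
      t.2.1.2 + t.2.2.2 = B + Finsupp.single t.1 1
  · simp only [if_pos hc]
    ring
  · simp only [if_neg hc]
    ring
/-- Proposition `fan`: for Hamiltonians with
`|F|_{r+ρ,s,η}, |G|_{r+ρ,s,η} < ∞` one has
`|{F,G}|_{r,s,η} ≤ 8 max{1, r/ρ} |F|_{r+ρ,s,η} |G|_{r+ρ,s,η}`, and the analogous estimate
holds for the weighted Lipschitz norms of Lipschitz families over `D_γ`. -/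
theorem poisson_bracket_estimate
    (θ p a : ℝ) (hθ0 : 0 < θ) (hθ1 : θ < 1) (hp : 1 < p) (ha : 0 ≤ a)
    (r ρ s η : ℝ) (hr : 0 < r) (hρ : 0 < ρ) (hs : 0 < s) (hη : 0 ≤ η) :
    (∀ F G : MIdx → MIdx → ℂ, IsHam F → IsHam G →
        hnorm θ p a (r + ρ) s η F ≠ ⊤ → hnorm θ p a (r + ρ) s η G ≠ ⊤ →
        hnorm θ p a r s η (pois F G) ≤
          ENNReal.ofReal (8 * max 1 (r / ρ)) *
            hnorm θ p a (r + ρ) s η F * hnorm θ p a (r + ρ) s η G) ∧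
    (∀ γ : ℝ, 0 < γ → γ < 1 →
      ∀ F G : (ℤ → ℝ) → MIdx → MIdx → ℂ,
        (∀ ω ∈ Dio γ, IsHam (F ω) ∧ IsHam (G ω)) →
        hnormLip γ θ p a (r + ρ) s η F ≠ ⊤ → hnormLip γ θ p a (r + ρ) s η G ≠ ⊤ →
        hnormLip γ θ p a r s η (fun ω => pois (F ω) (G ω)) ≤
          ENNReal.ofReal (8 * max 1 (r / ρ)) *
            hnormLip γ θ p a (r + ρ) s η F * hnormLip γ θ p a (r + ρ) s η G) := by
  constructor
  · intro F G hF hG _ _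
    exact key_est hr hρ hη hF hG
  · intro γ hγ0 hγ1 F G hHam hFfin hGfin
    set C := ENNReal.ofReal (8 * max 1 (r / ρ)) with hC
    set sF := ⨆ ω ∈ Dio γ, hnorm θ p a (r + ρ) s η (F ω) with hsF
    set lF := ⨆ ω ∈ Dio γ, ⨆ ω' ∈ Dio γ,
      hnorm θ p a (r + ρ) s η (fun α β => F ω α β - F ω' α β) / dsup ω ω' with hlF
    set sG := ⨆ ω ∈ Dio γ, hnorm θ p a (r + ρ) s η (G ω) with hsG
    set lG := ⨆ ω ∈ Dio γ, ⨆ ω' ∈ Dio γ,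
      hnorm θ p a (r + ρ) s η (fun α β => G ω α β - G ω' α β) / dsup ω ω' with hlG
    have hFeq : hnormLip γ θ p a (r + ρ) s η F = sF + ENNReal.ofReal γ * lF := rfl
    have hGeq : hnormLip γ θ p a (r + ρ) s η G = sG + ENNReal.ofReal γ * lG := rfl
    rw [hFeq] at hFfin
    rw [hGeq] at hGfin
    have hsFfin : sF ≠ ⊤ := fun h => hFfin (by rw [h, top_add])
    have hsGfin : sG ≠ ⊤ := fun h => hGfin (by rw [h, top_add])
    have hωF : ∀ ω ∈ Dio γ, hnorm θ p a (r + ρ) s η (F ω) ≠ ⊤ := by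
      intro ω hω
      refine ne_top_of_le_ne_top hsFfin ?_
      exact le_iSup₂_of_le ω hω le_rfl
    have hωG : ∀ ω ∈ Dio γ, hnorm θ p a (r + ρ) s η (G ω) ≠ ⊤ := by
      intro ω hω
      refine ne_top_of_le_ne_top hsGfin ?_
      exact le_iSup₂_of_le ω hω le_rfl
    have hsFle : ∀ ω ∈ Dio γ, hnorm θ p a (r + ρ) s η (F ω) ≤ sF :=
      fun ω hω => le_iSup₂_of_le ω hω le_rfl
    have hsGle : ∀ ω ∈ Dio γ, hnorm θ p a (r + ρ) s η (G ω) ≤ sG :=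
      fun ω hω => le_iSup₂_of_le ω hω le_rfl
    -- bound on the sup part
    have bound1 : (⨆ ω ∈ Dio γ, hnorm θ p a r s η (pois (F ω) (G ω))) ≤ C * sF * sG := by
      apply iSup₂_le
      intro ω hω
      calc hnorm θ p a r s η (pois (F ω) (G ω))
          ≤ C * hnorm θ p a (r + ρ) s η (F ω) * hnorm θ p a (r + ρ) s η (G ω) :=
            key_est hr hρ hη (hHam ω hω).1 (hHam ω hω).2
        _ ≤ C * sF * sG :=
            mul_le_mul' (mul_le_mul' le_rfl (hsFle ω hω)) (hsGle ω hω)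
    -- bound on the Lipschitz part
    have bound2 : (⨆ ω ∈ Dio γ, ⨆ ω' ∈ Dio γ,
        hnorm θ p a r s η (fun α β => pois (F ω) (G ω) α β - pois (F ω') (G ω') α β) /
          dsup ω ω') ≤ C * lF * sG + C * sF * lG := by
      apply iSup₂_le; intro ω hω
      apply iSup₂_le; intro ω' hω'
      have hamF := (hHam ω hω).1
      have hamG := (hHam ω hω).2
      have hamF' := (hHam ω' hω').1
      have hamG' := (hHam ω' hω').2
      have hamDF : IsHam (fun α β => F ω α β - F ω' α β) := isHam_sub hamF hamF'
      have hamDG : IsHam (fun α β => G ω α β - G ω' α β) := isHam_sub hamG hamG'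
      have hDFfin : hnorm θ p a (r + ρ) s η (fun α β => F ω α β - F ω' α β) ≠ ⊤ := by
        refine ne_top_of_le_ne_top (ENNReal.add_ne_top.2 ⟨hωF ω hω, hωF ω' hω'⟩) ?_
        exact hnorm_tri (by linarith) _ _ _ (fun α β => norm_sub_le _ _)
      have hDGfin : hnorm θ p a (r + ρ) s η (fun α β => G ω α β - G ω' α β) ≠ ⊤ := by
        refine ne_top_of_le_ne_top (ENNReal.add_ne_top.2 ⟨hωG ω hω, hωG ω' hω'⟩) ?_
        exact hnorm_tri (by linarith) _ _ _ (fun α β => norm_sub_le _ _)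
      have heq : (fun α β => pois (F ω) (G ω) α β - pois (F ω') (G ω') α β) =
          (fun α β => pois (fun α β => F ω α β - F ω' α β) (G ω) α β +
            pois (F ω') (fun α β => G ω α β - G ω' α β) α β) := by
        funext A B
        exact pois_sub A B
          (pois_summable hr hρ hη hamF hamG (hωF ω hω) (hωG ω hω) A B)
          (pois_summable hr hρ hη hamF' hamG' (hωF ω' hω') (hωG ω' hω') A B)
          (pois_summable hr hρ hη hamDF hamG hDFfin (hωG ω hω) A B)
          (pois_summable hr hρ hη hamF' hamDG (hωF ω' hω') hDGfin A B)
      have hlFle : hnorm θ p a (r + ρ) s η (fun α β => F ω α β - F ω' α β) / dsup ω ω' ≤ lF :=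
        le_iSup₂_of_le ω hω (le_iSup₂_of_le ω' hω' le_rfl)
      have hlGle : hnorm θ p a (r + ρ) s η (fun α β => G ω α β - G ω' α β) / dsup ω ω' ≤ lG :=
        le_iSup₂_of_le ω hω (le_iSup₂_of_le ω' hω' le_rfl)
      calc hnorm θ p a r s η (fun α β => pois (F ω) (G ω) α β - pois (F ω') (G ω') α β) /
            dsup ω ω'
          ≤ (hnorm θ p a r s η (pois (fun α β => F ω α β - F ω' α β) (G ω)) +
             hnorm θ p a r s η (pois (F ω') (fun α β => G ω α β - G ω' α β))) / dsup ω ω' := by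
            apply ENNReal.div_le_div_right
            rw [heq]
            exact hnorm_tri hr _ _ _ (fun α β => norm_add_le _ _)
        _ ≤ (C * hnorm θ p a (r + ρ) s η (fun α β => F ω α β - F ω' α β) * sG +
             C * sF * hnorm θ p a (r + ρ) s η (fun α β => G ω α β - G ω' α β)) / dsup ω ω' := by
            apply ENNReal.div_le_div_right
            apply add_le_add
            · exact (key_est hr hρ hη hamDF hamG).trans
                (mul_le_mul' le_rfl (hsGle ω hω))
            · exact (key_est hr hρ hη hamF' hamDG).trans
                (mul_le_mul' (mul_le_mul' le_rfl (hsFle ω' hω')) le_rfl)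
        _ = C * (hnorm θ p a (r + ρ) s η (fun α β => F ω α β - F ω' α β) / dsup ω ω') * sG +
            C * sF * (hnorm θ p a (r + ρ) s η (fun α β => G ω α β - G ω' α β) / dsup ω ω') := by
            rw [ENNReal.add_div]
            simp only [div_eq_mul_inv]
            ring
        _ ≤ C * lF * sG + C * sF * lG := by
            apply add_le_add
            · exact mul_le_mul' (mul_le_mul' le_rfl hlFle) le_rfl
            · exact mul_le_mul' le_rfl hlGle
    -- assemble
    have hPeq : hnormLip γ θ p a r s η (fun ω => pois (F ω) (G ω)) =
        (⨆ ω ∈ Dio γ, hnorm θ p a r s η (pois (F ω) (G ω))) +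
          ENNReal.ofReal γ *
            ⨆ ω ∈ Dio γ, ⨆ ω' ∈ Dio γ,
              hnorm θ p a r s η (fun α β => pois (F ω) (G ω) α β - pois (F ω') (G ω') α β) /
                dsup ω ω' := rfl
    rw [hPeq, hFeq, hGeq]
    calc (⨆ ω ∈ Dio γ, hnorm θ p a r s η (pois (F ω) (G ω))) +
          ENNReal.ofReal γ *
            ⨆ ω ∈ Dio γ, ⨆ ω' ∈ Dio γ,
              hnorm θ p a r s η (fun α β => pois (F ω) (G ω) α β - pois (F ω') (G ω') α β) /
                dsup ω ω'
        ≤ C * sF * sG + ENNReal.ofReal γ * (C * lF * sG + C * sF * lG) :=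
          add_le_add bound1 (mul_le_mul' le_rfl bound2)
      _ ≤ C * sF * sG + ENNReal.ofReal γ * (C * lF * sG + C * sF * lG) +
          C * (ENNReal.ofReal γ * lF) * (ENNReal.ofReal γ * lG) := le_self_add
      _ = C * (sF + ENNReal.ofReal γ * lF) * (sG + ENNReal.ofReal γ * lG) := by ring

end
end

section
/- Let m, δ : ℤ → ℕ be finitely supported multi-indices with δ ⪯ m and |δ| = q ≥ 1, and let 0 < κ ≤ κ*. Then Σ_{k ⪯ m−δ} binom(m−δ, k) · (κ*/κ)^{2|k|} · (|k|! · (|m|−|k|−1)!) / |m|! ≤ (1/q) · (κ*/κ)^{2|m|−2q}. -/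
open scoped ENNReal BigOperators Classical

noncomputable section

/-- Product of binomial coefficients `binom(m,δ) = ∏_i binom(m_i, δ_i)`. -/
def binomM (m δ : MIdx) : ℕ := ∏ i ∈ m.support, Nat.choose (m i) (δ i)

/-- `I^ν = ∏_i I_i^{ν_i}`. -/
def Ipow (I : ℤ → ℝ) (ν : MIdx) : ℝ := ∏ i ∈ ν.support, I i ^ ν i

/-- The coefficients of the projection `Π^{2q-2} H` relative to the torus of actions `I`:
writing `(A,B) = (γ+α, γ+β)` with `γ = min(A,B)` and `α, β` with disjoint supports,
`(Π^{2q-2}H)_{A,B} = Σ_{δ ⪰ γ, |δ| = q} Σ_{m ⪰ δ} binom(m,δ) binom(δ,γ) (-1)^{|δ-γ|}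
I^{m-γ} H_{m+α, m+β}` if `|γ| ≤ q`, and `0` otherwise. -/
def projCoef (I : ℤ → ℝ) (q : ℕ) (H : MIdx → MIdx → ℂ) (A B : MIdx) : ℂ :=
  let g : MIdx := A - (A - B)
  let α : MIdx := A - g
  let β : MIdx := B - g
  if deg g ≤ q then
    ∑' dm : MIdx × MIdx,
      (if g ≤ dm.1 ∧ deg dm.1 = q ∧ dm.1 ≤ dm.2 then
        ((-1 : ℂ) ^ (deg dm.1 - deg g)) * (binomM dm.2 dm.1 : ℂ) * (binomM dm.1 g : ℂ) *
          ((Ipow I (dm.2 - g) : ℝ) : ℂ) * H (dm.2 + α) (dm.2 + β)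
      else 0)
  else 0

/-- The constant `c_κ`. -/
def ckap (κ : ℝ) : ℝ := if 1 / 2 < κ ^ 2 then (Real.log ((κ ^ 2)⁻¹))⁻¹ else 2 * κ ^ 2


section AuxLemmas

open Finset

lemma deg_eq_sum' (α : MIdx) : deg α = α.sum fun _ n => n := rfl

lemma deg_add' (u v : MIdx) : deg (u + v) = deg u + deg v := by
  rw [deg_eq_sum', deg_eq_sum', deg_eq_sum']
  exact Finsupp.sum_add_index' (fun _ => rfl) (fun _ _ _ => rfl)

lemma deg_single' (a : ℤ) (c : ℕ) : deg (Finsupp.single a c) = c := by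
  rw [deg_eq_sum']; exact Finsupp.sum_single_index rfl

lemma S_succ' (b : ℕ) (h : ℕ → ℝ) :
    ∑ c ∈ range (b+1+1), ((b+1).choose c : ℝ) * h c
      = ∑ c ∈ range (b+1), (b.choose c : ℝ) * h c
        + ∑ c ∈ range (b+1), (b.choose c : ℝ) * h (c+1) := by
  rw [Finset.sum_range_succ' (fun c => ((b+1).choose c : ℝ) * h c) (b+1),
      Finset.sum_range_succ' (fun c => (b.choose c : ℝ) * h c) b]
  have h3 : ∑ c ∈ range (b+1), (b.choose (c+1) : ℝ) * h (c+1)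
      = ∑ c ∈ range b, (b.choose (c+1) : ℝ) * h (c+1) := by
    rw [Finset.sum_range_succ]; simp
  simp only [Nat.choose_succ_succ, Nat.cast_add, add_mul, Finset.sum_add_distrib, h3]
  simp [Nat.choose_zero_right]
  ring

lemma S_conv' (b : ℕ) : ∀ (d : ℕ) (g : ℕ → ℝ),
    ∑ c ∈ range (b+1), (b.choose c : ℝ) *
      ∑ l ∈ range (d+1), (d.choose l : ℝ) * g (c+l)
    = ∑ t ∈ range (b+d+1), ((b+d).choose t : ℝ) * g t := by
  induction b with
  | zero => intro d g; simp
  | succ b ih =>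
    intro d g
    rw [S_succ' b (fun c => ∑ l ∈ range (d+1), (d.choose l : ℝ) * g (c+l))]
    have h2 : ∑ c ∈ range (b+1), (b.choose c : ℝ) *
        ∑ l ∈ range (d+1), (d.choose l : ℝ) * g (c+1+l)
        = ∑ t ∈ range (b+d+1), ((b+d).choose t : ℝ) * g (t+1) := by
      rw [← ih d (fun t => g (t+1))]
      refine Finset.sum_congr rfl fun c _ => ?_
      congr 1
      refine Finset.sum_congr rfl fun l _ => ?_
      rw [show c+1+l = c+l+1 from by omega]
    rw [ih d g, h2]
    rw [show b+1+d+1 = (b+d)+1+1 from by ring, show b+1+d = (b+d)+1 from by ring,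
        S_succ' (b+d) g]

lemma sum_Iic_binomM' (M : MIdx) (g : ℕ → ℝ) :
    ∑ k ∈ Finset.Iic M, (binomM M k : ℝ) * g (deg k)
      = ∑ l ∈ range (deg M + 1), ((deg M).choose l : ℝ) * g l := by
  induction M using Finsupp.induction generalizing g with
  | zero =>
    have h1 : (Finset.Iic (0 : MIdx)) = {0} := by
      ext k; simp [Finset.mem_Iic, le_bot_iff]
    have h2 : deg (0 : MIdx) = 0 := rfl
    have h3 : binomM (0 : MIdx) 0 = 1 := rfl
    rw [h1]
    simp only [Finset.sum_singleton, Finset.range_one, h2, h3, Nat.cast_one]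
    simp
  | single_add a b f haf hb ih =>
    have hfa : f a = 0 := Finsupp.notMem_support_iff.mp haf
    have hsupp : (Finsupp.single a b + f).support = insert a f.support := by
      rw [Finsupp.support_add_eq, Finsupp.support_single_ne_zero a hb, ← Finset.insert_eq]
      rw [Finsupp.support_single_ne_zero a hb]
      simpa using haf
    have hMa : (Finsupp.single a b + f) a = b := by
      rw [Finsupp.add_apply, Finsupp.single_eq_same, hfa, add_zero]
    have hMne : ∀ i : ℤ, i ≠ a → (Finsupp.single a b + f) i = f i := by
      intro i hia
      rw [Finsupp.add_apply, Finsupp.single_eq_of_ne hia, zero_add]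
    have key : ∑ k ∈ Finset.Iic (Finsupp.single a b + f),
        (binomM (Finsupp.single a b + f) k : ℝ) * g (deg k)
        = ∑ p ∈ (range (b+1)) ×ˢ (Finset.Iic f),
            ((b.choose p.1 : ℝ) * (binomM f p.2 : ℝ)) * g (p.1 + deg p.2) := by
      refine Finset.sum_bij' (fun k _ => (k a, Finsupp.erase a k))
        (fun p _ => Finsupp.single a p.1 + p.2) ?_ ?_ ?_ ?_ ?_
      · intro k hk
        rw [Finset.mem_Iic] at hk
        rw [Finset.mem_product]
        dsimp only
        rw [Finset.mem_range, Finset.mem_Iic]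
        constructor
        · have := hk a; rw [hMa] at this; omega
        · rw [Finsupp.le_def]
          intro i
          by_cases hia : i = a
          · subst hia; rw [Finsupp.erase_same]; exact Nat.zero_le _
          · rw [Finsupp.erase_ne hia]
            have h1 := hk i
            rwa [hMne i hia] at h1
      · intro p hp
        rw [Finset.mem_product, Finset.mem_range, Finset.mem_Iic] at hp
        rw [Finset.mem_Iic, Finsupp.le_def]
        intro i
        by_cases hia : i = a
        · subst hia
          have h2 : p.2 i = 0 := by have := hp.2 i; omega
          rw [Finsupp.add_apply, Finsupp.single_eq_same, h2, hMa]
          omega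
        · rw [Finsupp.add_apply, Finsupp.single_eq_of_ne hia, zero_add,
            hMne i hia]
          exact hp.2 i
      · intro k _
        exact Finsupp.single_add_erase a k
      · intro p hp
        rw [Finset.mem_product, Finset.mem_range, Finset.mem_Iic] at hp
        have hp2a : p.2 a = 0 := by have := hp.2 a; omega
        have herase : Finsupp.erase a (Finsupp.single a p.1 + p.2) = p.2 := by
          rw [Finsupp.erase_add, Finsupp.erase_single,
            Finsupp.erase_of_notMem_support (Finsupp.notMem_support_iff.mpr hp2a),
            zero_add]
        have hval : (Finsupp.single a p.1 + p.2) a = p.1 := by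
          rw [Finsupp.add_apply, Finsupp.single_eq_same, hp2a, add_zero]
        rw [hval, herase]
      · intro k hk
        rw [Finset.mem_Iic] at hk
        dsimp only
        have hdk : deg k = k a + deg (Finsupp.erase a k) := by
          conv_lhs => rw [← Finsupp.single_add_erase a k]
          rw [deg_add', deg_single']
        have hbin : binomM (Finsupp.single a b + f) k
            = b.choose (k a) * binomM f (Finsupp.erase a k) := by
          rw [binomM, hsupp, Finset.prod_insert haf, hMa, binomM]
          congr 1
          refine Finset.prod_congr rfl fun i hi => ?_
          have hia : i ≠ a := fun h => haf (h ▸ hi)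
          rw [hMne i hia, Finsupp.erase_ne hia]
        rw [hbin, hdk]
        push_cast
        ring
    rw [key, Finset.sum_product]
    have hspl : ∀ c ∈ range (b+1), ∑ k ∈ Finset.Iic f,
        ((b.choose c : ℝ) * (binomM f k : ℝ)) * g (c + deg k)
        = (b.choose c : ℝ) * ∑ l ∈ range (deg f + 1), ((deg f).choose l : ℝ) * g (c + l) := by
      intro c _
      rw [← ih (fun l => g (c + l)), Finset.mul_sum]
      exact Finset.sum_congr rfl fun k _ => by ring
    rw [Finset.sum_congr rfl hspl, S_conv' b (deg f) g]
    rw [show deg (Finsupp.single a b + f) = b + deg f from by rw [deg_add', deg_single']]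

lemma sum_descFactorial' (r q : ℕ) (hq : 1 ≤ q) :
    ∑ l ∈ range (r+1), (r.descFactorial l : ℝ) * ((r + q - l - 1).factorial : ℝ)
      = ((r+q).factorial : ℝ) / q := by
  have hq0 : (q : ℝ) ≠ 0 := by positivity
  have hterm : ∀ l ∈ range (r+1),
      (r.descFactorial l : ℝ) * ((r + q - l - 1).factorial : ℝ)
      = (fun l => (r.descFactorial l : ℝ) * ((r + q - l).factorial : ℝ) / q) l
        - (fun l => (r.descFactorial l : ℝ) * ((r + q - l).factorial : ℝ) / q) (l+1) := by
    intro l hl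
    rw [Finset.mem_range] at hl
    have hlr : l ≤ r := by omega
    dsimp only
    have h2 : r + q - (l+1) = r + q - l - 1 := by omega
    rw [h2, Nat.descFactorial_succ]
    have h1 : r + q - l = (r + q - l - 1) + 1 := by omega
    rw [h1, Nat.factorial_succ]
    have hct : ((r + q - l - 1 : ℕ) : ℝ) = (r : ℝ) + q - l - 1 := by
      rw [show r + q - l - 1 = r + q - (l+1) from by omega,
        Nat.cast_sub (by omega : l + 1 ≤ r + q)]
      push_cast; ring
    have hcrl : ((r - l : ℕ) : ℝ) = (r : ℝ) - l := by rw [Nat.cast_sub hlr]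
    push_cast
    rw [hct, hcrl]
    field_simp
    ring
  rw [Finset.sum_congr rfl hterm, Finset.sum_range_sub']
  have h5 : r.descFactorial (r+1) = 0 := by
    simp [Nat.descFactorial_succ]
  simp [h5]

end AuxLemmas

/-- estimate `\eqref{serve}`: for multi-indices `δ ⪯ m` with `|δ| = q ≥ 1`
and `0 < κ ≤ κ*`,
`Σ_{k ⪯ m-δ} binom(m-δ,k) (κ*/κ)^{2|k|} |k|!(|m|-|k|-1)!/|m|! ≤ (1/q)(κ*/κ)^{2|m|-2q}`. -/
theorem factorial_binomial_sum_bound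
    (m δ : MIdx) (q : ℕ) (hq : 1 ≤ q) (hδm : δ ≤ m) (hdeg : deg δ = q)
    (κ κs : ℝ) (hκ0 : 0 < κ) (hκκs : κ ≤ κs) :
    (∑' k : MIdx, if k ≤ m - δ then
        (binomM (m - δ) k : ℝ) * (κs / κ) ^ (2 * deg k) *
          (((deg k).factorial : ℝ) * ((deg m - deg k - 1).factorial : ℝ)) /
            ((deg m).factorial : ℝ)
      else 0) ≤
      (1 / (q : ℝ)) * (κs / κ) ^ (2 * deg m - 2 * q) := by
  have hsub : (m - δ) + δ = m := tsub_add_cancel_of_le hδm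
  have hdegm : deg m = deg (m - δ) + q := by
    conv_lhs => rw [← hsub]
    rw [deg_add', hdeg]
  set x : ℝ := κs / κ with hx
  have hx1 : 1 ≤ x := (one_le_div hκ0).mpr hκκs
  have hx0 : (0:ℝ) ≤ x := by linarith
  set r := deg (m - δ) with hr
  set g : ℕ → ℝ := fun l => x ^ (2*l) *
      ((l.factorial : ℝ) * ((deg m - l - 1).factorial : ℝ)) / ((deg m).factorial : ℝ)
    with hg
  have h1 : (∑' k : MIdx, if k ≤ m - δ then
        (binomM (m - δ) k : ℝ) * (κs / κ) ^ (2 * deg k) *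
          (((deg k).factorial : ℝ) * ((deg m - deg k - 1).factorial : ℝ)) /
            ((deg m).factorial : ℝ)
      else 0)
      = ∑ k ∈ Finset.Iic (m - δ), (binomM (m-δ) k : ℝ) * g (deg k) := by
    rw [tsum_eq_sum (s := Finset.Iic (m-δ))
      (fun k hk => if_neg (fun h => hk (Finset.mem_Iic.mpr h)))]
    refine Finset.sum_congr rfl fun k hk => ?_
    rw [if_pos (Finset.mem_Iic.mp hk), hg]
    dsimp only
    rw [← hx]
    ring
  rw [h1, sum_Iic_binomM', ← hr]
  have h2q : 2 * deg m - 2*q = 2*r := by omega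
  rw [h2q]
  have hnf : (0:ℝ) < ((deg m).factorial : ℝ) := by positivity
  have hbound : ∀ l ∈ Finset.range (r+1), (r.choose l : ℝ) * g l
      ≤ x ^ (2*r) / ((deg m).factorial : ℝ) *
        ((r.descFactorial l : ℝ) * ((r + q - l - 1).factorial : ℝ)) := by
    intro l hl
    rw [Finset.mem_range] at hl
    have hlr : l ≤ r := by omega
    have hdm : deg m - l - 1 = r + q - l - 1 := by omega
    have hxp : x ^ (2*l) ≤ x ^ (2*r) := pow_le_pow_right₀ hx1 (by omega)
    have hLHS : (r.choose l : ℝ) * g l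
        = ((r.choose l : ℝ) * ((l.factorial : ℝ) * ((r + q - l - 1).factorial : ℝ))
            / ((deg m).factorial : ℝ)) * x ^ (2*l) := by
      rw [hg]; dsimp only; rw [hdm]; ring
    have hRHS : x ^ (2*r) / ((deg m).factorial : ℝ) *
        ((r.descFactorial l : ℝ) * ((r + q - l - 1).factorial : ℝ))
        = ((r.choose l : ℝ) * ((l.factorial : ℝ) * ((r + q - l - 1).factorial : ℝ))
            / ((deg m).factorial : ℝ)) * x ^ (2*r) := by
      rw [Nat.descFactorial_eq_factorial_mul_choose]
      push_cast
      ring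
    rw [hLHS, hRHS]
    have hc0 : (0:ℝ) ≤ (r.choose l : ℝ) *
        ((l.factorial : ℝ) * ((r + q - l - 1).factorial : ℝ)) / ((deg m).factorial : ℝ) := by
      positivity
    exact mul_le_mul_of_nonneg_left hxp hc0
  calc ∑ l ∈ Finset.range (r+1), (r.choose l : ℝ) * g l
      ≤ ∑ l ∈ Finset.range (r+1), x ^ (2*r) / ((deg m).factorial : ℝ) *
          ((r.descFactorial l : ℝ) * ((r + q - l - 1).factorial : ℝ)) :=
        Finset.sum_le_sum hbound
    _ = x ^ (2*r) / ((deg m).factorial : ℝ) *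
          ∑ l ∈ Finset.range (r+1),
            (r.descFactorial l : ℝ) * ((r + q - l - 1).factorial : ℝ) := by
        rw [Finset.mul_sum]
    _ = x ^ (2*r) / ((deg m).factorial : ℝ) * (((r+q).factorial : ℝ) / q) := by
        rw [sum_descFactorial' r q hq]
    _ = (1 / (q:ℝ)) * x ^ (2*r) := by
        rw [show r + q = deg m from by omega]
        field_simp


end
end

section
/- Let θ ∈ (0,1) and let α, β : ℤ → ℕ be finitely supported multi-indices with |α| = |β|. Then for every j ∈ ℤ with α_j + β_j ≠ 0 one has Σ_{i∈ℤ} ⟨i⟩^θ (α_i + β_i) − 2⟨j⟩^θ + |π(α−β)| ≥ 0, where π(α−β) := Σ_i i(α_i − β_i). -/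
open scoped ENNReal BigOperators Classical

noncomputable section

lemma one_le_jb (i : ℤ) : 1 ≤ jb i := le_max_right _ _
lemma jb_nonneg (i : ℤ) : 0 ≤ jb i := zero_le_one.trans (one_le_jb i)
lemma jb_neg (i : ℤ) : jb (-i) = jb i := by simp [jb]
lemma rpow_subadd {θ : ℝ} (h0 : 0 ≤ θ) (h1 : θ ≤ 1) (a b : ℝ) (ha : 0 ≤ a) (hb : 0 ≤ b) :
    (a + b) ^ θ ≤ a ^ θ + b ^ θ := by
  have h := NNReal.rpow_add_le_add_rpow a.toNNReal b.toNNReal h0 h1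
  rw [← Real.toNNReal_add ha hb] at h
  have h2 := NNReal.coe_le_coe.mpr h
  simpa [NNReal.coe_rpow, Real.coe_toNNReal _ (by positivity : (0:ℝ) ≤ a + b),
    Real.coe_toNNReal _ ha, Real.coe_toNNReal _ hb] using h2
variable {θ : ℝ}
lemma one_le_f (h0 : 0 ≤ θ) (i : ℤ) : 1 ≤ jb i ^ θ := by
  calc (1:ℝ) = 1 ^ θ := (Real.one_rpow θ).symm
  _ ≤ jb i ^ θ := Real.rpow_le_rpow zero_le_one (one_le_jb i) h0
lemma f_subadd (h0 : 0 ≤ θ) (h1 : θ ≤ 1) (x y : ℤ) :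
    jb (x + y) ^ θ ≤ jb x ^ θ + jb y ^ θ := by
  have hj : jb (x + y) ≤ jb x + jb y := by
    have h1' : |((x+y : ℤ) : ℝ)| ≤ jb x + jb y := by
      push_cast
      calc |(x:ℝ) + y| ≤ |(x:ℝ)| + |(y:ℝ)| := abs_add_le _ _
      _ ≤ jb x + jb y := add_le_add (le_max_left _ _) (le_max_left _ _)
    have h2' : (1:ℝ) ≤ jb x + jb y := by
      have := add_le_add (one_le_jb x) (one_le_jb y); linarith
    exact max_le h1' h2'
  calc jb (x+y) ^ θ ≤ (jb x + jb y) ^ θ := Real.rpow_le_rpow (jb_nonneg _) hj h0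
  _ ≤ jb x ^ θ + jb y ^ θ := rpow_subadd h0 h1 _ _ (jb_nonneg _) (jb_nonneg _)
lemma f_nsmul (h0 : 0 ≤ θ) (h1 : θ ≤ 1) (n : ℕ) (x a : ℤ) :
    jb (x + n * a) ^ θ ≤ jb x ^ θ + n * jb a ^ θ := by
  induction n with
  | zero => simp
  | succ n ih =>
    have : x + (n+1 : ℕ) * a = (x + n * a) + a := by push_cast; ring
    rw [this]
    calc jb ((x + n*a) + a) ^ θ ≤ jb (x + n*a) ^ θ + jb a ^ θ := f_subadd h0 h1 _ _
    _ ≤ jb x ^ θ + n * jb a ^ θ + jb a ^ θ := by linarith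
    _ = jb x ^ θ + (n+1 : ℕ) * jb a ^ θ := by push_cast; ring
lemma f_sum (h0 : 0 ≤ θ) (h1 : θ ≤ 1) (t : Finset ℤ) (w : ℤ → ℕ) (g : ℤ → ℤ) (x : ℤ) :
    jb (x + ∑ i ∈ t, (w i : ℤ) * g i) ^ θ ≤ jb x ^ θ + ∑ i ∈ t, (w i : ℝ) * jb (g i) ^ θ := by
  classical
  induction t using Finset.induction_on generalizing x with
  | empty => simp
  | insert _ _ hnotmem =>
    rename_i a s ih
    rw [Finset.sum_insert hnotmem, Finset.sum_insert hnotmem]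
    have h1' : x + ((w a : ℤ) * g a + ∑ i ∈ s, (w i : ℤ) * g i)
        = (x + (w a : ℤ) * g a) + ∑ i ∈ s, (w i : ℤ) * g i := by ring
    rw [h1']
    calc jb ((x + (w a:ℤ) * g a) + ∑ i ∈ s, (w i:ℤ) * g i) ^ θ
        ≤ jb (x + (w a:ℤ) * g a) ^ θ + ∑ i ∈ s, (w i : ℝ) * jb (g i) ^ θ := ih _
      _ ≤ (jb x ^ θ + (w a : ℝ) * jb (g a) ^ θ) + ∑ i ∈ s, (w i : ℝ) * jb (g i) ^ θ := by
          have := f_nsmul h0 h1 (w a) x (g a); push_cast at this ⊢; linarith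
      _ = jb x ^ θ + ((w a : ℝ) * jb (g a) ^ θ + ∑ i ∈ s, (w i : ℝ) * jb (g i) ^ θ) := by ring

lemma key (hθ0 : 0 < θ) (hθ1 : θ < 1)
    (α β : MIdx) (hdeg : deg α = deg β) (j : ℤ) (hαj : 1 ≤ α j) :
    2 * jb j ^ θ ≤ (∑ i ∈ α.support ∪ β.support, ((α i : ℝ) + (β i : ℝ)) * jb i ^ θ)
      + |(mom α β : ℝ)| := by
  classical
  have h0 : 0 ≤ θ := hθ0.le
  have h1 : θ ≤ 1 := hθ1.le
  set S := α.support ∪ β.support with hS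
  have hjS : j ∈ S := Finset.mem_union_left _ (Finsupp.mem_support_iff.mpr (by omega))
  -- find k with β k ≥ 1
  have hdegα : 1 ≤ deg α := by
    have := Finset.single_le_sum (f := fun i => α i) (fun i _ => Nat.zero_le _)
      (Finsupp.mem_support_iff.mpr (show α j ≠ 0 by omega))
    exact le_trans hαj this
  have hβne : β.support.Nonempty := by
    by_contra h
    rw [Finset.not_nonempty_iff_eq_empty] at h
    have : deg β = 0 := by simp [deg, h]
    omega
  obtain ⟨k, hk⟩ := hβne
  have hβk : 1 ≤ β k := Nat.one_le_iff_ne_zero.mpr (Finsupp.mem_support_iff.mp hk)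
  have hkS : k ∈ S := Finset.mem_union_right _ hk
  set α' : ℤ → ℕ := fun i => if i = j then α j - 1 else α i with hα'
  set β' : ℤ → ℕ := fun i => if i = k then β k - 1 else β i with hβ'
  -- integer sums identities
  have hsumα : ∑ i ∈ S, (α' i : ℤ) * i = (∑ i ∈ S, (α i : ℤ) * i) - j := by
    rw [← Finset.sum_erase_add S _ hjS, ← Finset.sum_erase_add S (fun i => (α i : ℤ) * i) hjS]
    have : ∑ i ∈ S.erase j, (α' i : ℤ) * i = ∑ i ∈ S.erase j, (α i : ℤ) * i :=
      Finset.sum_congr rfl (fun i hi => by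
        simp [hα', Finset.ne_of_mem_erase hi])
    rw [this]
    have : ((α' j : ℕ) : ℤ) = (α j : ℤ) - 1 := by simp [hα']; omega
    rw [this]; ring
  have hsumβ : ∑ i ∈ S, (β' i : ℤ) * i = (∑ i ∈ S, (β i : ℤ) * i) - k := by
    rw [← Finset.sum_erase_add S _ hkS, ← Finset.sum_erase_add S (fun i => (β i : ℤ) * i) hkS]
    have : ∑ i ∈ S.erase k, (β' i : ℤ) * i = ∑ i ∈ S.erase k, (β i : ℤ) * i :=
      Finset.sum_congr rfl (fun i hi => by
        simp [hβ', Finset.ne_of_mem_erase hi])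
    rw [this]
    have : ((β' k : ℕ) : ℤ) = (β k : ℤ) - 1 := by simp [hβ']; omega
    rw [this]; ring
  have hmom : mom α β = (∑ i ∈ S, (α i : ℤ) * i) - ∑ i ∈ S, (β i : ℤ) * i := by
    rw [mom, ← Finset.sum_sub_distrib]
    exact Finset.sum_congr rfl (fun i _ => by ring)
  have hneg : ∑ i ∈ S, (α' i : ℤ) * (-i) = -∑ i ∈ S, (α' i : ℤ) * i := by
    rw [← Finset.sum_neg_distrib]
    exact Finset.sum_congr rfl (fun i _ => by ring)
  have hid : (j : ℤ) = ((mom α β + k) + ∑ i ∈ S, (β' i : ℤ) * i) + ∑ i ∈ S, (α' i : ℤ) * (-i) := by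
    rw [hneg, hsumα, hsumβ, hmom]; ring
  -- apply subadditivity
  have H2 : jb j ^ θ ≤ jb ((mom α β + k) + ∑ i ∈ S, (β' i : ℤ) * i) ^ θ
      + ∑ i ∈ S, (α' i : ℝ) * jb i ^ θ := by
    have := f_sum h0 h1 S α' (fun i => -i) ((mom α β + k) + ∑ i ∈ S, (β' i : ℤ) * i)
    rw [← hid] at this
    simpa [jb_neg] using this
  have H1 : jb ((mom α β + k) + ∑ i ∈ S, (β' i : ℤ) * i) ^ θ
      ≤ jb (mom α β + k) ^ θ + ∑ i ∈ S, (β' i : ℝ) * jb i ^ θ :=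
    f_sum h0 h1 S β' (fun i => i) _
  -- head bound
  have Hhead : jb (mom α β + k) ^ θ ≤ |(mom α β : ℝ)| + jb k ^ θ := by
    rcases eq_or_ne (mom α β) 0 with h | h
    · simp [h]
    · have hstep := f_subadd h0 h1 (mom α β) k
      have habs : (1:ℝ) ≤ |((mom α β : ℤ) : ℝ)| := by
        have := Int.one_le_abs (by omega : mom α β ≠ 0)
        exact_mod_cast this
      have hjbm : jb (mom α β) = |((mom α β : ℤ) : ℝ)| := max_eq_left habs
      have : jb (mom α β) ^ θ ≤ jb (mom α β) := by
        calc jb (mom α β) ^ θ ≤ jb (mom α β) ^ (1:ℝ) :=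
          Real.rpow_le_rpow_of_exponent_le (one_le_jb _) h1
        _ = jb (mom α β) := Real.rpow_one _
      rw [hjbm] at this hstep
      linarith
  -- real sum identities
  have hrα : ∑ i ∈ S, (α' i : ℝ) * jb i ^ θ = (∑ i ∈ S, (α i : ℝ) * jb i ^ θ) - jb j ^ θ := by
    rw [← Finset.sum_erase_add S _ hjS, ← Finset.sum_erase_add S (fun i => (α i : ℝ) * jb i ^ θ) hjS]
    have he : ∑ i ∈ S.erase j, (α' i : ℝ) * jb i ^ θ
        = ∑ i ∈ S.erase j, (α i : ℝ) * jb i ^ θ :=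
      Finset.sum_congr rfl (fun i hi => by simp [hα', Finset.ne_of_mem_erase hi])
    rw [he]
    have : ((α' j : ℕ) : ℝ) = (α j : ℝ) - 1 := by
      simp only [hα', if_pos rfl]; push_cast [Nat.cast_sub hαj]; ring
    rw [this]; ring
  have hrβ : ∑ i ∈ S, (β' i : ℝ) * jb i ^ θ = (∑ i ∈ S, (β i : ℝ) * jb i ^ θ) - jb k ^ θ := by
    rw [← Finset.sum_erase_add S _ hkS, ← Finset.sum_erase_add S (fun i => (β i : ℝ) * jb i ^ θ) hkS]
    have he : ∑ i ∈ S.erase k, (β' i : ℝ) * jb i ^ θ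
        = ∑ i ∈ S.erase k, (β i : ℝ) * jb i ^ θ :=
      Finset.sum_congr rfl (fun i hi => by simp [hβ', Finset.ne_of_mem_erase hi])
    rw [he]
    have : ((β' k : ℕ) : ℝ) = (β k : ℝ) - 1 := by
      simp only [hβ', if_pos rfl]; push_cast [Nat.cast_sub hβk]; ring
    rw [this]; ring
  have hsplit : ∑ i ∈ S, ((α i : ℝ) + (β i : ℝ)) * jb i ^ θ
      = (∑ i ∈ S, (α i : ℝ) * jb i ^ θ) + ∑ i ∈ S, (β i : ℝ) * jb i ^ θ := by
    rw [← Finset.sum_add_distrib]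
    exact Finset.sum_congr rfl (fun i _ => by ring)
  rw [hrα] at H2
  rw [hrβ] at H1
  rw [hsplit]
  linarith


lemma mom_swap (α β : MIdx) : mom β α = - mom α β := by
  rw [mom, mom, Finset.union_comm, ← Finset.sum_neg_distrib]
  exact Finset.sum_congr rfl fun i _ => by ring

/-- inequality (3.20) / `\eqref{stima1}`: if `|α| = |β|` then for every `j`
with `α_j + β_j ≠ 0`, `Σ_i ⟨i⟩^θ (α_i + β_i) - 2⟨j⟩^θ + |π(α-β)| ≥ 0`. -/
theorem weight_nonnegativity
    (θ : ℝ) (hθ0 : 0 < θ) (hθ1 : θ < 1)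
    (α β : MIdx) (hdeg : deg α = deg β) (j : ℤ) (hj : α j + β j ≠ 0) :
    0 ≤ (∑ i ∈ α.support ∪ β.support, ((α i : ℝ) + (β i : ℝ)) * jb i ^ θ)
        - 2 * jb j ^ θ + |(mom α β : ℝ)| := by
  rcases Nat.eq_zero_or_pos (α j) with h | h
  · have hβj : 1 ≤ β j := by omega
    have hms : mom β α = - mom α β := mom_swap α β
    have hk := key hθ0 hθ1 β α hdeg.symm j hβj
    rw [hms] at hk
    have habs : |((-mom α β : ℤ) : ℝ)| = |((mom α β : ℤ) : ℝ)| := by push_cast; rw [abs_neg]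
    rw [habs] at hk
    have hsum : ∑ i ∈ β.support ∪ α.support, ((β i : ℝ) + (α i : ℝ)) * jb i ^ θ
        = ∑ i ∈ α.support ∪ β.support, ((α i : ℝ) + (β i : ℝ)) * jb i ^ θ := by
      rw [Finset.union_comm]
      exact Finset.sum_congr rfl fun i _ => by ring
    rw [hsum] at hk
    linarith
  · have hk := key hθ0 hθ1 α β hdeg j h
    linarith

end
end
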